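/- The TNNIL-algorithm preserves theorems of iGL and of iK4: for every modal proposition B, if iGL ⊢ B then iGL ⊢ B⁺, and if iK4 ⊢ B then iK4 ⊢ B⁺. -/

import Mathlib

namespace PLHA

/-! ## Modal propositional language -/

/-- Modal propositional formulas: atomic variables, ⊥, ∧, ∨, →, □. -/
inductive Form : Type
  | var : ℕ → Form
  | bot : Form
  | and : Form → Form → Form
  | or  : Form → Form → Form
  | imp : Form → Form → Form
  | box : Form → Form
  deriving DecidableEq

namespace Form

/-- ⊤ -/
def top : Form := imp bot bot

/-- A ↔ B -/
def iffF (A B : Form) : Form := and (imp A B) (imp B A)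

/-- ⊡A := A ∧ □A -/
def boxdot (A : Form) : Form := and A (box A)

/-- `A ∈ NOI`: every occurrence of → is in the scope of some □. -/
def noi : Form → Bool
  | var _ => true
  | bot => true
  | and A B => noi A && noi B
  | or A B => noi A && noi B
  | imp _ _ => false
  | box _ => true

/-- The Leivant translation `A^l`. -/
def lev : Form → Form
  | var n => var n
  | bot => bot
  | and A B => and (lev A) (lev B)
  | or A B => or (boxdot (lev A)) (boxdot (lev B))
  | imp A B => if noi A then imp A (lev B) else imp A B
  | box A => box A

/-- atomic propositions: atomic variables and ⊥. -/
def isAtom (A : Form) : Prop := (∃ n, A = var n) ∨ A = bot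

/-- boxed propositions. -/
def isBoxed (A : Form) : Prop := ∃ B, A = box B

/-- non-modal (□-free) propositions. -/
def boxFree : Form → Bool
  | var _ => true
  | bot => true
  | and A B => boxFree A && boxFree B
  | or A B => boxFree A && boxFree B
  | imp A B => boxFree A && boxFree B
  | box _ => false

/-- A bound on the indices of the variables occurring in a formula. -/
def fvb : Form → ℕ
  | var n => n + 1
  | bot => 0
  | and A B => max (fvb A) (fvb B)
  | or A B => max (fvb A) (fvb B)
  | imp A B => max (fvb A) (fvb B)
  | box A => fvb A

/-- maximal nesting depth of boxes. -/
def bdep : Form → ℕ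
  | var _ => 0
  | bot => 0
  | and A B => max (bdep A) (bdep B)
  | or A B => max (bdep A) (bdep B)
  | imp A B => max (bdep A) (bdep B)
  | box A => bdep A + 1

/-- the complexity measure ρ used to define NNIL. -/
def rho : Form → ℕ
  | var _ => 0
  | bot => 0
  | and A B => max (rho A) (rho B)
  | or A B => max (rho A) (rho B)
  | imp A B => max (rho A + 1) (rho B)
  | box _ => 0

end Form

/-- NNIL: no nested implications to the left. -/
def NNILc (A : Form) : Prop := Form.rho A ≤ 1

/-- TNNIL: thoroughly NNIL propositions. -/
inductive TNNIL : Form → Prop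
  | var (n : ℕ) : TNNIL (.var n)
  | bot : TNNIL .bot
  | and {A B} : TNNIL A → TNNIL B → TNNIL (.and A B)
  | or {A B} : TNNIL A → TNNIL B → TNNIL (.or A B)
  | box {A} : TNNIL A → TNNIL (.box A)
  | imp {A B} : A.noi = true → TNNIL A → TNNIL B → TNNIL (.imp A B)

/-- TNNIL⁻: propositions of the form B(□C₁,…,□Cₙ) with B non-modal and Cᵢ ∈ TNNIL. -/
inductive TNNILminus : Form → Prop
  | var (n : ℕ) : TNNILminus (.var n)
  | bot : TNNILminus .bot
  | box {A} : TNNIL A → TNNILminus (.box A)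
  | and {A B} : TNNILminus A → TNNILminus B → TNNILminus (.and A B)
  | or {A B} : TNNILminus A → TNNILminus B → TNNILminus (.or A B)
  | imp {A B} : TNNILminus A → TNNILminus B → TNNILminus (.imp A B)

/-! ## Proof systems -/

/-- Hilbert-style axioms of intuitionistic propositional logic (over the modal language). -/
inductive IpcAx : Form → Prop
  | a1 (A B) : IpcAx (.imp A (.imp B A))
  | a2 (A B C) : IpcAx (.imp (.imp A (.imp B C)) (.imp (.imp A B) (.imp A C)))
  | a3 (A B) : IpcAx (.imp A (.imp B (.and A B)))
  | a4 (A B) : IpcAx (.imp (.and A B) A)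
  | a5 (A B) : IpcAx (.imp (.and A B) B)
  | a6 (A B) : IpcAx (.imp A (.or A B))
  | a7 (A B) : IpcAx (.imp B (.or A B))
  | a8 (A B C) : IpcAx (.imp (.imp A C) (.imp (.imp B C) (.imp (.or A B) C)))
  | a9 (A) : IpcAx (.imp .bot A)

/-- Derivability from IPC axioms together with extra axioms `Ax`, modus ponens,
and (if `useNec = true`) the necessitation rule. -/
inductive Proves (Ax : Form → Prop) (useNec : Bool) : Form → Prop
  | ax {A} : Ax A → Proves Ax useNec A
  | ipc {A} : IpcAx A → Proves Ax useNec A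
  | mp {A B} : Proves Ax useNec (.imp A B) → Proves Ax useNec A → Proves Ax useNec B
  | nec {A} : useNec = true → Proves Ax useNec A → Proves Ax useNec (.box A)

/-- K and 4 axiom schemas. -/
inductive K4Ax : Form → Prop
  | k (A B) : K4Ax (.imp (.box (.imp A B)) (.imp (.box A) (.box B)))
  | four (A) : K4Ax (.imp (.box A) (.box (.box A)))

/-- K, 4, and Löb's axiom schemas. -/
inductive GLAx : Form → Prop
  | k (A B) : GLAx (.imp (.box (.imp A B)) (.imp (.box A) (.box B)))
  | four (A) : GLAx (.imp (.box A) (.box (.box A)))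
  | lob (A) : GLAx (.imp (.box (.imp (.box A) A)) (.box A))

/-- IPC_□ : intuitionistic propositional logic over the modal language. -/
def IPCbProves : Form → Prop := Proves (fun _ => False) false

/-- iK4. -/
def iK4Proves : Form → Prop := Proves K4Ax true

/-- iGL. -/
def iGLProves : Form → Prop := Proves GLAx true

/-- the completeness principle CP : A → □A. -/
def CPAx : Form → Prop := fun F => ∃ A : Form, F = .imp A (.box A)

/-- LC := iGL + CP. -/
def LCProves : Form → Prop := Proves (fun F => GLAx F ∨ CPAx F) true

/-- CP restricted to atomic propositions. -/
def CPaAx : Form → Prop := fun F => ∃ A : Form, A.isAtom ∧ F = .imp A (.box A)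

/-- the extended Leivant principle Le⁺ : □A → □A^l. -/
def LeplusAx : Form → Prop := fun F => ∃ A : Form, F = .imp (.box A) (.box A.lev)

/-- LLe⁺ := iGL + Le⁺ + CP_a. -/
def LLeplusProves : Form → Prop := Proves (fun F => GLAx F ∨ LeplusAx F ∨ CPaAx F) true

/-! ## The preservativity relation ▶ -/

/-- the bracket operation [A]B. -/
def bracket (A : Form) : Form → Form
  | .and B C => .and (bracket A B) (bracket A C)
  | .or B C => .or (bracket A B) (bracket A C)
  | .imp B C => .imp A (.imp B C)
  | B => B

def listConj : List Form → Form
  | [] => Form.top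
  | [A] => A
  | A :: l => .and A (listConj l)

def listDisj : List Form → Form
  | [] => Form.bot
  | [A] => A
  | A :: l => .or A (listDisj l)

/-- the relation ▶ : the smallest relation satisfying A1–A4 and B1–B3.
In B2 a (finite) set of implications is represented by a list `X` of pairs `(E, F)`
standing for the implications `E → F`. -/
inductive Pres : Form → Form → Prop
  | a1 {A B} : iK4Proves (.imp A B) → Pres A B
  | a2 {A B C} : Pres A B → Pres B C → Pres A C
  | a3 {A B C} : Pres C A → Pres C B → Pres C (.and A B)
  | a4 {A B} : Pres A B → Pres (.box A) (.box B)
  | b1 {A B C} : Pres A C → Pres B C → Pres (.or A B) C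
  | b2 (X : List (Form × Form)) (C : Form) :
      Pres (.imp (listConj (X.map fun p => Form.imp p.1 p.2)) C)
        (listDisj ((X.map Prod.fst ++ [C]).map
          (bracket (listConj (X.map fun p => Form.imp p.1 p.2)))))
  | b3 {A B C} : Pres A B → (C.isAtom ∨ C.isBoxed) → Pres (.imp C A) (.imp C B)

/-- the axioms of H_σ : LLe⁺ + CP_a + {□A→□B : A ▶ B}. -/
def HsigmaAx : Form → Prop := fun F =>
  GLAx F ∨ LeplusAx F ∨ CPaAx F ∨ ∃ A B : Form, Pres A B ∧ F = .imp (.box A) (.box B)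

/-- H_σ. -/
def HsigmaProves : Form → Prop := Proves HsigmaAx true

/-! ## NNIL/TNNIL approximations -/

/-- `star` is (a realization of) Visser's NNIL-algorithm: `star A` is the best NNIL
approximation of `A` from below. -/
def IsNNILApproxOp (star : Form → Form) : Prop :=
  ∀ A : Form, NNILc (star A) ∧ IPCbProves (.imp (star A) A) ∧
    ∀ B : Form, NNILc B → IPCbProves (.imp B A) → IPCbProves (.imp B (star A))

/-- replace the outermost boxed subformulas of a formula by the fresh variables
`k, k+1, …` (left to right), returning the resulting non-modal skeleton together
with the list of bodies of removed boxes. -/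
def strip : Form → ℕ → Form × List Form
  | .var n, _ => (.var n, [])
  | .bot, _ => (.bot, [])
  | .and A B, k =>
      let pa := strip A k
      let pb := strip B (k + pa.2.length)
      (.and pa.1 pb.1, pa.2 ++ pb.2)
  | .or A B, k =>
      let pa := strip A k
      let pb := strip B (k + pa.2.length)
      (.or pa.1 pb.1, pa.2 ++ pb.2)
  | .imp A B, k =>
      let pa := strip A k
      let pb := strip B (k + pa.2.length)
      (.imp pa.1 pb.1, pa.2 ++ pb.2)
  | .box A, k => (.var k, [A])

/-- simultaneous substitution of formulas for variables. -/
def substF (f : ℕ → Form) : Form → Form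
  | .var n => f n
  | .bot => .bot
  | .and A B => .and (substF f A) (substF f B)
  | .or A B => .or (substF f A) (substF f B)
  | .imp A B => .imp (substF f A) (substF f B)
  | .box A => .box (substF f A)

/-- fuelled version of the TNNIL approximation `A⁺`:
`A⁺ := (A')^*[pᵢ | □Bᵢ⁺]` where `A = A'[pᵢ | □Bᵢ]` with `A'` non-modal. -/
def plusAux (star : Form → Form) : ℕ → Form → Form
  | 0, A => A
  | fuel + 1, A =>
      let k := A.fvb
      let p := strip A k
      substF (fun n =>
        if k ≤ n ∧ n < k + p.2.length then
          .box (plusAux star fuel (p.2.getD (n - k) .bot))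
        else .var n) (star p.1)

/-- the TNNIL approximation `A⁺` (relative to a realization `star` of the NNIL-algorithm). -/
def plusF (star : Form → Form) (A : Form) : Form := plusAux star (A.bdep + 1) A

/-- `A⁻`: writing `A = B(□C₁,…,□Cₙ)` with `B` non-modal, `A⁻ := B(□C₁⁺,…,□Cₙ⁺)`. -/
def minusF (star : Form → Form) (A : Form) : Form :=
  let k := A.fvb
  let p := strip A k
  substF (fun n =>
    if k ≤ n ∧ n < k + p.2.length then
      .box (plusF star (p.2.getD (n - k) .bot))
    else .var n) p.1

/-- the box translation A^□. -/
def boxTr : Form → Form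
  | .var n => Form.boxdot (.var n)
  | .bot => Form.boxdot .bot
  | .and A B => .and (boxTr A) (boxTr B)
  | .or A B => .or (boxTr A) (boxTr B)
  | .imp A B => Form.boxdot (.imp (boxTr A) (boxTr B))
  | .box A => .box (boxTr A)

/-- a Gödel numbering of modal formulas. -/
def encodeForm : Form → ℕ
  | .var n => Nat.pair 0 n
  | .bot => Nat.pair 1 0
  | .and A B => Nat.pair 2 (Nat.pair (encodeForm A) (encodeForm B))
  | .or A B => Nat.pair 3 (Nat.pair (encodeForm A) (encodeForm B))
  | .imp A B => Nat.pair 4 (Nat.pair (encodeForm A) (encodeForm B))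
  | .box A => Nat.pair 5 (encodeForm A)

/-! ## Propositional Kripke models -/

/-- Kripke models for intuitionistic modal logic. -/
structure PKripke where
  W : Type
  le : W → W → Prop
  r : W → W → Prop
  V : W → ℕ → Prop
  le_refl : ∀ w, le w w
  le_trans : ∀ {a b c}, le a b → le b c → le a c
  le_antisymm : ∀ {a b}, le a b → le b a → a = b
  le_r : ∀ {a b c}, le a b → r b c → r a c
  mono : ∀ {a b : W} {n : ℕ}, le a b → V a n → V b n

/-- the forcing relation of a propositional modal Kripke model. -/
def pforces (M : PKripke) : Form → M.W → Prop
  | .var n, w => M.V w n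
  | .bot, _ => False
  | .and A B, w => pforces M A w ∧ pforces M B w
  | .or A B, w => pforces M A w ∨ pforces M B w
  | .imp A B, w => ∀ v, M.le w v → pforces M A v → pforces M B v
  | .box A, w => ∀ v, M.r w v → pforces M A v

namespace PKripke

/-- brilliant: (R;≤) ⊆ R. -/
def Brilliant (M : PKripke) : Prop := ∀ {a b c : M.W}, M.r a b → M.le b c → M.r a c

/-- reverse well-founded: well-founded with respect to R⁻¹. -/
def RevWF (M : PKripke) : Prop := WellFounded (fun a b : M.W => M.r b a)

/-- perfect: brilliant, reverse well-founded, and R ⊆ <. -/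
def Perfect (M : PKripke) : Prop :=
  M.Brilliant ∧ M.RevWF ∧ ∀ {a b : M.W}, M.r a b → M.le a b ∧ a ≠ b

/-- the partial order (W,≤) is a tree: it has a root and the set of predecessors
of every node is linearly ordered. -/
def TreeFrame (M : PKripke) : Prop :=
  (∃ root : M.W, ∀ w, M.le root w) ∧
  ∀ w u v : M.W, M.le u w → M.le v w → (M.le u v ∨ M.le v u)

end PKripke

/-! ## First-order arithmetic -/

/-- terms of the language (S, +, ·, <, 0) (de Bruijn variables). -/
inductive ATerm : Type
  | var : ℕ → ATerm
  | zero : ATerm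
  | succ : ATerm → ATerm
  | add : ATerm → ATerm → ATerm
  | mul : ATerm → ATerm → ATerm
  deriving DecidableEq

namespace ATerm

def lift : ATerm → ℕ → ATerm
  | var n, d => if n < d then var n else var (n + 1)
  | zero, _ => zero
  | succ t, d => succ (t.lift d)
  | add t u, d => add (t.lift d) (u.lift d)
  | mul t u, d => mul (t.lift d) (u.lift d)

def subst : ATerm → ℕ → ATerm → ATerm
  | var n, k, s => if n < k then var n else if n = k then s else var (n - 1)
  | zero, _, _ => zero
  | succ t, k, s => succ (t.subst k s)
  | add t u, k, s => add (t.subst k s) (u.subst k s)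
  | mul t u, k, s => mul (t.subst k s) (u.subst k s)

/-- non-binding substitution: replace `var k` by `s`, leaving other variables alone. -/
def substId : ATerm → ℕ → ATerm → ATerm
  | var n, k, s => if n = k then s else var n
  | zero, _, _ => zero
  | succ t, k, s => succ (t.substId k s)
  | add t u, k, s => add (t.substId k s) (u.substId k s)
  | mul t u, k, s => mul (t.substId k s) (u.substId k s)

/-- all variables have index < k. -/
def vlt : ATerm → ℕ → Prop
  | var n, k => n < k
  | zero, _ => True
  | succ t, k => t.vlt k
  | add t u, k => t.vlt k ∧ u.vlt k
  | mul t u, k => t.vlt k ∧ u.vlt k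

/-- evaluation in the standard model ℕ. -/
def evalN : ATerm → (ℕ → ℕ) → ℕ
  | var n, ρ => ρ n
  | zero, _ => 0
  | succ t, ρ => t.evalN ρ + 1
  | add t u, ρ => t.evalN ρ + u.evalN ρ
  | mul t u, ρ => t.evalN ρ * u.evalN ρ

def fvB : ATerm → ℕ
  | var n => n + 1
  | zero => 0
  | succ t => t.fvB
  | add t u => max t.fvB u.fvB
  | mul t u => max t.fvB u.fvB

/-- a Gödel numbering of terms. -/
def code : ATerm → ℕ
  | var n => Nat.pair 0 n
  | zero => Nat.pair 1 0
  | succ t => Nat.pair 2 t.code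
  | add t u => Nat.pair 3 (Nat.pair t.code u.code)
  | mul t u => Nat.pair 4 (Nat.pair t.code u.code)

end ATerm

/-- the numeral of a natural number. -/
def numeral : ℕ → ATerm
  | 0 => .zero
  | n + 1 => .succ (numeral n)

/-- extend an environment by one value at index 0. -/
def econs {α : Sort*} (b : α) (ρ : ℕ → α) : ℕ → α
  | 0 => b
  | n + 1 => ρ n

/-- first-order formulas of arithmetic (de Bruijn variables). -/
inductive AForm : Type
  | eq : ATerm → ATerm → AForm
  | lt : ATerm → ATerm → AForm
  | fal : AForm
  | and : AForm → AForm → AForm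
  | or : AForm → AForm → AForm
  | imp : AForm → AForm → AForm
  | all : AForm → AForm
  | ex : AForm → AForm
  deriving DecidableEq

namespace AForm

def neg (A : AForm) : AForm := imp A fal

def iffA (A B : AForm) : AForm := and (imp A B) (imp B A)

def lift : AForm → ℕ → AForm
  | eq t u, d => eq (t.lift d) (u.lift d)
  | lt t u, d => lt (t.lift d) (u.lift d)
  | fal, _ => fal
  | and A B, d => and (A.lift d) (B.lift d)
  | or A B, d => or (A.lift d) (B.lift d)
  | imp A B, d => imp (A.lift d) (B.lift d)
  | all A, d => all (A.lift (d + 1))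
  | ex A, d => ex (A.lift (d + 1))

/-- capture-avoiding substitution of a term for variable `k` (instantiating a binder). -/
def subst : AForm → ℕ → ATerm → AForm
  | eq t u, k, s => eq (t.subst k s) (u.subst k s)
  | lt t u, k, s => lt (t.subst k s) (u.subst k s)
  | fal, _, _ => fal
  | and A B, k, s => and (A.subst k s) (B.subst k s)
  | or A B, k, s => or (A.subst k s) (B.subst k s)
  | imp A B, k, s => imp (A.subst k s) (B.subst k s)
  | all A, k, s => all (A.subst (k + 1) (s.lift 0))
  | ex A, k, s => ex (A.subst (k + 1) (s.lift 0))

/-- non-binding substitution: replace the free variable `k` by `s`. -/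
def substId : AForm → ℕ → ATerm → AForm
  | eq t u, k, s => eq (t.substId k s) (u.substId k s)
  | lt t u, k, s => lt (t.substId k s) (u.substId k s)
  | fal, _, _ => fal
  | and A B, k, s => and (A.substId k s) (B.substId k s)
  | or A B, k, s => or (A.substId k s) (B.substId k s)
  | imp A B, k, s => imp (A.substId k s) (B.substId k s)
  | all A, k, s => all (A.substId (k + 1) (s.lift 0))
  | ex A, k, s => ex (A.substId (k + 1) (s.lift 0))

/-- all free variables have index < k. -/
def vlt : AForm → ℕ → Prop
  | eq t u, k => t.vlt k ∧ u.vlt k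
  | lt t u, k => t.vlt k ∧ u.vlt k
  | fal, _ => True
  | and A B, k => A.vlt k ∧ B.vlt k
  | or A B, k => A.vlt k ∧ B.vlt k
  | imp A B, k => A.vlt k ∧ B.vlt k
  | all A, k => A.vlt (k + 1)
  | ex A, k => A.vlt (k + 1)

/-- a bound on the free variables of a formula. -/
def fvB : AForm → ℕ
  | eq t u => max t.fvB u.fvB
  | lt t u => max t.fvB u.fvB
  | fal => 0
  | and A B => max A.fvB B.fvB
  | or A B => max A.fvB B.fvB
  | imp A B => max A.fvB B.fvB
  | all A => A.fvB - 1
  | ex A => A.fvB - 1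

/-- classical (Tarskian) satisfaction in the standard model ℕ. -/
def SatN : AForm → (ℕ → ℕ) → Prop
  | eq t u, ρ => t.evalN ρ = u.evalN ρ
  | lt t u, ρ => t.evalN ρ < u.evalN ρ
  | fal, _ => False
  | and A B, ρ => A.SatN ρ ∧ B.SatN ρ
  | or A B, ρ => A.SatN ρ ∨ B.SatN ρ
  | imp A B, ρ => A.SatN ρ → B.SatN ρ
  | all A, ρ => ∀ n : ℕ, A.SatN (econs n ρ)
  | ex A, ρ => ∃ n : ℕ, A.SatN (econs n ρ)

/-- a Gödel numbering of arithmetic formulas. -/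
def code : AForm → ℕ
  | eq t u => Nat.pair 0 (Nat.pair t.code u.code)
  | lt t u => Nat.pair 1 (Nat.pair t.code u.code)
  | fal => Nat.pair 2 0
  | and A B => Nat.pair 3 (Nat.pair A.code B.code)
  | or A B => Nat.pair 4 (Nat.pair A.code B.code)
  | imp A B => Nat.pair 5 (Nat.pair A.code B.code)
  | all A => Nat.pair 6 A.code
  | ex A => Nat.pair 7 A.code

end AForm

/-- Δ₀ formulas: only bounded quantifiers. -/
inductive Delta0 : AForm → Prop
  | eq (t u) : Delta0 (.eq t u)
  | lt (t u) : Delta0 (.lt t u)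
  | fal : Delta0 .fal
  | and {A B} : Delta0 A → Delta0 B → Delta0 (.and A B)
  | or {A B} : Delta0 A → Delta0 B → Delta0 (.or A B)
  | imp {A B} : Delta0 A → Delta0 B → Delta0 (.imp A B)
  | ball (t : ATerm) {A} : Delta0 A → Delta0 (.all (.imp (.lt (.var 0) (t.lift 0)) A))
  | bex (t : ATerm) {A} : Delta0 A → Delta0 (.ex (.and (.lt (.var 0) (t.lift 0)) A))

/-- Σ₁ formulas: existential quantifiers over a Δ₀ matrix. -/
inductive Sigma1 : AForm → Prop
  | of_delta0 {A} : Delta0 A → Sigma1 A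
  | ex {A} : Sigma1 A → Sigma1 (.ex A)

/-- a Hilbert-style proof system for intuitionistic first-order logic with equality,
from a set `T` of (closed) non-logical axioms. -/
inductive Prf (T : AForm → Prop) : AForm → Prop
  | hyp {A} : T A → Prf T A
  | mp {A B} : Prf T (.imp A B) → Prf T A → Prf T B
  | gen {A} : Prf T A → Prf T (.all A)
  | k (A B) : Prf T (.imp A (.imp B A))
  | s (A B C) : Prf T (.imp (.imp A (.imp B C)) (.imp (.imp A B) (.imp A C)))
  | pair (A B) : Prf T (.imp A (.imp B (.and A B)))
  | fst (A B) : Prf T (.imp (.and A B) A)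
  | snd (A B) : Prf T (.imp (.and A B) B)
  | inl (A B) : Prf T (.imp A (.or A B))
  | inr (A B) : Prf T (.imp B (.or A B))
  | cases (A B C) : Prf T (.imp (.imp A C) (.imp (.imp B C) (.imp (.or A B) C)))
  | exfalso (A) : Prf T (.imp .fal A)
  | allE (A : AForm) (t : ATerm) : Prf T (.imp (.all A) (A.subst 0 t))
  | allShift (A B : AForm) : Prf T (.imp (.all (.imp (B.lift 0) A)) (.imp B (.all A)))
  | exI (A : AForm) (t : ATerm) : Prf T (.imp (A.subst 0 t) (.ex A))
  | exE (A B : AForm) : Prf T (.imp (.all (.imp A (B.lift 0))) (.imp (.ex A) B))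
  | eqRefl : Prf T (.all (.eq (.var 0) (.var 0)))
  | leibniz (A : AForm) : Prf T (.all (.all (.imp (.eq (.var 1) (.var 0))
      (.imp (((A.lift 1).lift 1).substId 0 (.var 1))
            (((A.lift 1).lift 1).substId 0 (.var 0))))))

/-- iterated universal quantification. -/
def ucAux : ℕ → AForm → AForm
  | 0, A => A
  | k + 1, A => ucAux k (.all A)

/-- universal closure. -/
def uc (A : AForm) : AForm := ucAux A.fvB A

/-- the induction axiom for the formula A (induction on variable 0). -/
def indAx (A : AForm) : AForm :=
  uc (.imp (.and (A.subst 0 .zero) (.all (.imp A (A.substId 0 (.succ (.var 0))))))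
      (.all A))

/-- the axioms Q1–Q8. -/
inductive QAx : AForm → Prop
  | q1 : QAx (.all (.imp (.eq (.succ (.var 0)) .zero) .fal))
  | q2 : QAx (.all (.all (.imp (.eq (.succ (.var 1)) (.succ (.var 0))) (.eq (.var 1) (.var 0)))))
  | q3 : QAx (.all (.or (.eq (.var 0) .zero) (.ex (.eq (.succ (.var 0)) (.var 1)))))
  | q4 : QAx (.all (.eq (.add (.var 0) .zero) (.var 0)))
  | q5 : QAx (.all (.all (.eq (.add (.var 1) (.succ (.var 0))) (.succ (.add (.var 1) (.var 0))))))
  | q6 : QAx (.all (.eq (.mul (.var 0) .zero) .zero))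
  | q7 : QAx (.all (.all (.eq (.mul (.var 1) (.succ (.var 0))) (.add (.mul (.var 1) (.var 0)) (.var 1)))))
  | q8 : QAx (.all (.all (AForm.iffA (.lt (.var 1) (.var 0))
      (.ex (.eq (.add (.var 2) (.succ (.var 0))) (.var 1))))))

/-- the axioms of Heyting Arithmetic: Q1–Q8 and full induction. -/
def HAAx : AForm → Prop := fun A => QAx A ∨ ∃ B : AForm, A = indAx B

/-- provability in HA. -/
def HAProves : AForm → Prop := Prf HAAx

/-- interface for the standard arithmetized provability predicate `Prov_HA` of HA:
`Pr A` is the Σ₁ sentence `Prov_HA(⌜A⌝)`. -/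
structure ProvPred where
  Pr : AForm → AForm
  sentence : ∀ A, (Pr A).vlt 0
  sigma1 : ∀ A, Sigma1 (Pr A)
  correct : ∀ A : AForm, ((Pr A).SatN (fun _ => 0) ↔ HAProves A)
  dNec : ∀ A, HAProves A → HAProves (Pr A)
  dK : ∀ A B, HAProves (.imp (Pr (.imp A B)) (.imp (Pr A) (Pr B)))
  dSigma : ∀ A, Sigma1 A → A.vlt 0 → HAProves (.imp A (Pr A))
  dLob : ∀ A, HAProves (.imp (Pr (.imp (Pr A) A)) (Pr A))

/-- the arithmetical interpretation `σ_HA` of modal formulas determined by a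
substitution `σ` and a provability predicate `Pr`. -/
def interp (Pr : AForm → AForm) (σ : ℕ → AForm) : Form → AForm
  | .var n => σ n
  | .bot => .fal
  | .and A B => .and (interp Pr σ A) (interp Pr σ B)
  | .or A B => .or (interp Pr σ A) (interp Pr σ B)
  | .imp A B => .imp (interp Pr σ A) (interp Pr σ B)
  | .box A => Pr (interp Pr σ A)

/-- σ is an arithmetical substitution: it maps atomic variables to sentences. -/
def ArithSubst (σ : ℕ → AForm) : Prop := ∀ n, (σ n).vlt 0

/-- σ is a Σ₁-substitution: it maps atomic variables to Σ₁ sentences. -/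
def Sigma1Subst (σ : ℕ → AForm) : Prop := ∀ n, Sigma1 (σ n) ∧ (σ n).vlt 0

/-! ## The theories HAₓ and indexed provability (for the refined Leivant principle) -/

/-- induction formulas of the special shape (A→B)→B with A, B ∈ Σ₁. -/
def shapeInd (A : AForm) : Prop := ∃ S Tf : AForm, Sigma1 S ∧ Sigma1 Tf ∧ A = .imp (.imp S Tf) Tf

/-- the axioms of HAₓ: Q1-Q8, and induction restricted to formulas of the shape
(A→B)→B with A,B ∈ Σ₁ or with Gödel number ≤ x. -/
def HAxAx (x : ℕ) : AForm → Prop := fun A =>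
  QAx A ∨ ∃ B : AForm, (shapeInd B ∨ B.code ≤ x) ∧ A = indAx B

/-- interface for the arithmetized bounded provability predicates `□ₓ`:
`PrB A` is the Σ₁ formula with free variable 0 expressing `Prov_{HA_{v₀}}(⌜A⌝)`, and
`PrBSub A` (for `A` with one free variable) is the Σ₁ formula with free variables 0, 1
expressing `Prov_{HA_{v₀}}(⌜A(v̇₁)⌝)`. -/
structure BddProvPred where
  PrB : AForm → AForm
  PrBSub : AForm → AForm
  PrB_vlt : ∀ A, (PrB A).vlt 1
  PrB_sigma1 : ∀ A, Sigma1 (PrB A)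
  PrB_correct : ∀ (A : AForm) (n : ℕ),
    ((PrB A).SatN (fun i => if i = 0 then n else 0) ↔ Prf (HAxAx n) A)
  PrBSub_vlt : ∀ A, (PrBSub A).vlt 2
  PrBSub_sigma1 : ∀ A, Sigma1 (PrBSub A)
  PrBSub_correct : ∀ (A : AForm) (n m : ℕ),
    ((PrBSub A).SatN (fun i => if i = 0 then n else m) ↔ Prf (HAxAx n) (A.subst 0 (numeral m)))

/-! ## First-order Kripke models of HA -/

/-- a first-order Kripke model for the language of arithmetic over the frame `(W, le)`:
each node carries a classical structure, and the structure at a smaller node is a weak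
substructure of the structure at a bigger one (realized as subsets of a common universe,
closed under the operations). -/
structure FOKripke (W : Type) (le : W → W → Prop) where
  U : Type
  dom : W → Set U
  zero : U
  succ : U → U
  add : U → U → U
  mul : U → U → U
  ltR : U → U → Prop
  dom_mono : ∀ {a b : W}, le a b → dom a ⊆ dom b
  zero_mem : ∀ a, zero ∈ dom a
  succ_mem : ∀ a x, x ∈ dom a → succ x ∈ dom a
  add_mem : ∀ a x y, x ∈ dom a → y ∈ dom a → add x y ∈ dom a
  mul_mem : ∀ a x y, x ∈ dom a → y ∈ dom a → mul x y ∈ dom a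

/-- evaluation of a term in a first-order Kripke model. -/
def tevalK {W : Type} {le : W → W → Prop} (M : FOKripke W le) (ρ : ℕ → M.U) : ATerm → M.U
  | .var n => ρ n
  | .zero => M.zero
  | .succ t => M.succ (tevalK M ρ t)
  | .add t u => M.add (tevalK M ρ t) (tevalK M ρ u)
  | .mul t u => M.mul (tevalK M ρ t) (tevalK M ρ u)

/-- the forcing relation of a first-order Kripke model. -/
def FOForces {W : Type} {le : W → W → Prop} (M : FOKripke W le) :
    AForm → W → (ℕ → M.U) → Prop
  | .eq t u, _, ρ => tevalK M ρ t = tevalK M ρ u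
  | .lt t u, _, ρ => M.ltR (tevalK M ρ t) (tevalK M ρ u)
  | .fal, _, _ => False
  | .and A B, w, ρ => FOForces M A w ρ ∧ FOForces M B w ρ
  | .or A B, w, ρ => FOForces M A w ρ ∨ FOForces M B w ρ
  | .imp A B, w, ρ => ∀ v, le w v → FOForces M A v ρ → FOForces M B v ρ
  | .all A, w, ρ => ∀ v, le w v → ∀ b ∈ M.dom v, FOForces M A v (econs b ρ)
  | .ex A, w, ρ => ∃ b ∈ M.dom w, FOForces M A w (econs b ρ)

/-- the Kripke model forces all axioms of HA. -/
def ForcesHA {W : Type} {le : W → W → Prop} (M : FOKripke W le) : Prop :=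
  ∀ A : AForm, HAAx A → ∀ w : W, FOForces M A w (fun _ => M.zero)

end PLHA

namespace PLHA

open Form

/-! ### Hilbert-proof infrastructure -/

theorem proves_impId {Ax : Form → Prop} {u : Bool} {A : Form} : Proves Ax u (.imp A A) :=
  .mp (.mp (.ipc (.a2 A (.imp A A) A)) (.ipc (.a1 A (.imp A A)))) (.ipc (.a1 A A))

/-- Hilbert proofs from a list of hypotheses (no necessitation under hypotheses,
but arbitrary theorems may be imported). -/
inductive PrfH (Ax : Form → Prop) (u : Bool) : List Form → Form → Prop
  | hyp {Γ A} : A ∈ Γ → PrfH Ax u Γ A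
  | thm {Γ A} : Proves Ax u A → PrfH Ax u Γ A
  | mp {Γ A B} : PrfH Ax u Γ (.imp A B) → PrfH Ax u Γ A → PrfH Ax u Γ B

namespace PrfH

variable {Ax : Form → Prop} {u : Bool} {Γ Γ' : List Form} {A B C D E : Form}

theorem ipc (h : IpcAx A) : PrfH Ax u Γ A := thm (Proves.ipc h)

theorem wk (h : PrfH Ax u Γ A) (s : ∀ x ∈ Γ, x ∈ Γ') : PrfH Ax u Γ' A := by
  induction h with
  | hyp h => exact hyp (s _ h)
  | thm h => exact thm h
  | mp _ _ ih1 ih2 => exact mp ih1 ih2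

theorem wk1 (h : PrfH Ax u Γ A) : PrfH Ax u (B :: Γ) A :=
  h.wk (fun x hx => List.mem_cons_of_mem _ hx)

theorem ded (h : PrfH Ax u (B :: Γ) A) : PrfH Ax u Γ (.imp B A) := by
  induction h with
  | hyp h =>
    rcases List.mem_cons.mp h with h | h
    · exact h ▸ thm proves_impId
    · exact mp (ipc (.a1 _ _)) (hyp h)
  | thm h => exact mp (ipc (.a1 _ _)) (thm h)
  | mp _ _ ih1 ih2 => exact mp (mp (ipc (.a2 _ _ _)) ih1) ih2

theorem toProves (h : PrfH Ax u [] A) : Proves Ax u A := by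
  induction h with
  | hyp h => exact absurd h (List.not_mem_nil)
  | thm h => exact h
  | mp _ _ ih1 ih2 => exact ih1.mp ih2

theorem andI (h1 : PrfH Ax u Γ A) (h2 : PrfH Ax u Γ B) : PrfH Ax u Γ (.and A B) :=
  mp (mp (ipc (.a3 _ _)) h1) h2

theorem andE1 (h : PrfH Ax u Γ (.and A B)) : PrfH Ax u Γ A := mp (ipc (.a4 _ _)) h
theorem andE2 (h : PrfH Ax u Γ (.and A B)) : PrfH Ax u Γ B := mp (ipc (.a5 _ _)) h
theorem orI1 (h : PrfH Ax u Γ A) : PrfH Ax u Γ (.or A B) := mp (ipc (.a6 _ _)) h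
theorem orI2 (h : PrfH Ax u Γ B) : PrfH Ax u Γ (.or A B) := mp (ipc (.a7 _ _)) h
theorem orE (h : PrfH Ax u Γ (.or A B)) (h1 : PrfH Ax u Γ (.imp A C))
    (h2 : PrfH Ax u Γ (.imp B C)) : PrfH Ax u Γ C :=
  mp (mp (mp (ipc (.a8 _ _ _)) h1) h2) h
theorem botE (h : PrfH Ax u Γ .bot) : PrfH Ax u Γ A := mp (ipc (.a9 _)) h

theorem hyp0 : PrfH Ax u (A :: Γ) A := hyp (List.mem_cons_self)

theorem iffE1 (h : PrfH Ax u Γ (iffF A B)) : PrfH Ax u Γ (.imp A B) := andE1 h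
theorem iffE2 (h : PrfH Ax u Γ (iffF A B)) : PrfH Ax u Γ (.imp B A) := andE2 h

/-- cut: use a proved implication with one hypothesis. -/
theorem cut (h1 : PrfH Ax u [E] A) (h2 : PrfH Ax u Γ E) : PrfH Ax u Γ A :=
  mp (thm (toProves (ded h1))) h2

end PrfH

section ProvesLemmas

variable {Ax : Form → Prop} {u : Bool} {A B C A' B' E : Form}

theorem pMp (h1 : Proves Ax u (.imp A B)) (h2 : Proves Ax u A) : Proves Ax u B := h1.mp h2

theorem pAndI (h1 : Proves Ax u A) (h2 : Proves Ax u B) : Proves Ax u (.and A B) :=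
  ((Proves.ipc (.a3 _ _)).mp h1).mp h2

theorem pAndE1 (h : Proves Ax u (.and A B)) : Proves Ax u A := (Proves.ipc (.a4 _ _)).mp h
theorem pAndE2 (h : Proves Ax u (.and A B)) : Proves Ax u B := (Proves.ipc (.a5 _ _)).mp h

theorem pImpTrans (h1 : Proves Ax u (.imp A B)) (h2 : Proves Ax u (.imp B C)) :
    Proves Ax u (.imp A C) := by
  refine PrfH.toProves (PrfH.ded ?_)
  exact PrfH.mp (.thm h2) (PrfH.mp (.thm h1) PrfH.hyp0)

theorem pIffRefl : Proves Ax u (iffF A A) := pAndI proves_impId proves_impId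

theorem pIffSymm (h : Proves Ax u (iffF A B)) : Proves Ax u (iffF B A) :=
  pAndI (pAndE2 h) (pAndE1 h)

theorem pIffTrans (h1 : Proves Ax u (iffF A B)) (h2 : Proves Ax u (iffF B C)) :
    Proves Ax u (iffF A C) :=
  pAndI (pImpTrans (pAndE1 h1) (pAndE1 h2)) (pImpTrans (pAndE2 h2) (pAndE2 h1))

theorem pIffMp (h : Proves Ax u (iffF A B)) (h2 : Proves Ax u A) : Proves Ax u B :=
  (pAndE1 h).mp h2

/-- congruence for ∧ under a context. -/
theorem PrfH.iffAnd (h1 : PrfH Ax u Γ (iffF A A')) (h2 : PrfH Ax u Γ (iffF B B')) :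
    PrfH Ax u Γ (iffF (.and A B) (.and A' B')) := by
  refine PrfH.andI (PrfH.ded ?_) (PrfH.ded ?_)
  · exact PrfH.andI (PrfH.mp h1.wk1.iffE1 PrfH.hyp0.andE1)
      (PrfH.mp h2.wk1.iffE1 PrfH.hyp0.andE2)
  · exact PrfH.andI (PrfH.mp h1.wk1.iffE2 PrfH.hyp0.andE1)
      (PrfH.mp h2.wk1.iffE2 PrfH.hyp0.andE2)

theorem PrfH.iffOr (h1 : PrfH Ax u Γ (iffF A A')) (h2 : PrfH Ax u Γ (iffF B B')) :
    PrfH Ax u Γ (iffF (.or A B) (.or A' B')) := by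
  refine PrfH.andI (PrfH.ded ?_) (PrfH.ded ?_)
  · exact PrfH.orE PrfH.hyp0
      (PrfH.ded (PrfH.orI1 (PrfH.mp h1.wk1.wk1.iffE1 PrfH.hyp0)))
      (PrfH.ded (PrfH.orI2 (PrfH.mp h2.wk1.wk1.iffE1 PrfH.hyp0)))
  · exact PrfH.orE PrfH.hyp0
      (PrfH.ded (PrfH.orI1 (PrfH.mp h1.wk1.wk1.iffE2 PrfH.hyp0)))
      (PrfH.ded (PrfH.orI2 (PrfH.mp h2.wk1.wk1.iffE2 PrfH.hyp0)))

theorem PrfH.iffImp (h1 : PrfH Ax u Γ (iffF A A')) (h2 : PrfH Ax u Γ (iffF B B')) :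
    PrfH Ax u Γ (iffF (.imp A B) (.imp A' B')) := by
  refine PrfH.andI (PrfH.ded (PrfH.ded ?_)) (PrfH.ded (PrfH.ded ?_))
  · exact PrfH.mp h2.wk1.wk1.iffE1
      (PrfH.mp PrfH.hyp0.wk1 (PrfH.mp h1.wk1.wk1.iffE2 PrfH.hyp0))
  · exact PrfH.mp h2.wk1.wk1.iffE2
      (PrfH.mp PrfH.hyp0.wk1 (PrfH.mp h1.wk1.wk1.iffE1 PrfH.hyp0))

theorem pIffAnd (h1 : Proves Ax u (iffF A A')) (h2 : Proves Ax u (iffF B B')) :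
    Proves Ax u (iffF (.and A B) (.and A' B')) :=
  PrfH.toProves (PrfH.iffAnd (.thm h1) (.thm h2))

theorem pIffOr (h1 : Proves Ax u (iffF A A')) (h2 : Proves Ax u (iffF B B')) :
    Proves Ax u (iffF (.or A B) (.or A' B')) :=
  PrfH.toProves (PrfH.iffOr (.thm h1) (.thm h2))

theorem pIffImp (h1 : Proves Ax u (iffF A A')) (h2 : Proves Ax u (iffF B B')) :
    Proves Ax u (iffF (.imp A B) (.imp A' B')) :=
  PrfH.toProves (PrfH.iffImp (.thm h1) (.thm h2))

end ProvesLemmas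

end PLHA

namespace PLHA

open Form

section BoxAndList

variable {Ax : Form → Prop} {u : Bool} {A B C : Form}

/-- K-style box monotonicity, given the K axiom. -/
theorem pBoxMono (hK : ∀ A B, Proves Ax true (.imp (.box (.imp A B)) (.imp (.box A) (.box B))))
    (h : Proves Ax true (.imp A B)) : Proves Ax true (.imp (.box A) (.box B)) :=
  (hK A B).mp (Proves.nec rfl h)

theorem pBoxIff (hK : ∀ A B, Proves Ax true (.imp (.box (.imp A B)) (.imp (.box A) (.box B))))
    (h : Proves Ax true (iffF A B)) : Proves Ax true (iffF (.box A) (.box B)) :=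
  pAndI (pBoxMono hK (pAndE1 h)) (pBoxMono hK (pAndE2 h))

theorem listConj_elim {l : List Form} (h : C ∈ l) : Proves Ax u (.imp (listConj l) C) := by
  induction l with
  | nil => exact absurd h (List.not_mem_nil)
  | cons A l ih =>
    rcases List.mem_cons.mp h with rfl | h
    · cases l with
      | nil => exact proves_impId
      | cons B l => exact .ipc (.a4 _ _)
    · cases l with
      | nil => exact absurd h (List.not_mem_nil)
      | cons B l' => exact pImpTrans (.ipc (.a5 _ _)) (ih h)

theorem listConj_intro {l : List Form} (h : ∀ C ∈ l, Proves Ax u C) :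
    Proves Ax u (listConj l) := by
  induction l with
  | nil => exact proves_impId
  | cons A l ih =>
    cases l with
    | nil => exact h _ (List.mem_cons_self)
    | cons B l' =>
      exact pAndI (h _ (List.mem_cons_self))
        (ih (fun C hC => h _ (List.mem_cons_of_mem _ hC)))

theorem substF_listConj (f : ℕ → Form) (l : List Form) :
    substF f (listConj l) = listConj (l.map (substF f)) := by
  induction l with
  | nil => rfl
  | cons A l ih =>
    cases l with
    | nil => rfl
    | cons B l' => simpa [listConj, substF] using ih

theorem rho_listConj {l : List Form} (h : ∀ C ∈ l, Form.rho C ≤ 1) :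
    Form.rho (listConj l) ≤ 1 := by
  induction l with
  | nil => simp [listConj, Form.top, Form.rho]
  | cons A l ih =>
    cases l with
    | nil => exact h _ (List.mem_cons_self)
    | cons B l' =>
      simp only [listConj, Form.rho, max_le_iff]
      exact ⟨h _ (List.mem_cons_self), ih (fun C hC => h _ (List.mem_cons_of_mem _ hC))⟩

end BoxAndList

section ProvesInfra

variable {Ax : Form → Prop} {u : Bool} {A B : Form}

theorem IpcAx.substF_closed {f : ℕ → Form} (h : IpcAx A) : IpcAx (substF f A) := by
  cases h <;> simp only [substF] <;> constructor

theorem proves_substF (hAx : ∀ (f : ℕ → Form) (X : Form), Ax X → Ax (substF f X))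
    (f : ℕ → Form) (h : Proves Ax u A) : Proves Ax u (substF f A) := by
  induction h with
  | ax h => exact .ax (hAx f _ h)
  | ipc h => exact .ipc h.substF_closed
  | mp _ _ ih1 ih2 => exact ih1.mp ih2
  | nec hu _ ih => exact .nec hu ih

theorem ipcb_to (h : IPCbProves A) : Proves Ax u A := by
  induction h with
  | ax h => exact absurd h (fun h => h)
  | ipc h => exact .ipc h
  | mp _ _ ih1 ih2 => exact ih1.mp ih2
  | nec hu _ => exact absurd hu (by simp)

theorem ipcb_substF (f : ℕ → Form) (h : IPCbProves A) : IPCbProves (substF f A) :=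
  proves_substF (fun _ _ h => h.elim) f h

/-- any map which is a homomorphism for ⊥, ∧, ∨, → preserves IPC provability. -/
theorem ipcb_map (m : Form → Form)
    (hi : ∀ A B, m (.imp A B) = .imp (m A) (m B))
    (ha : ∀ A B, m (.and A B) = .and (m A) (m B))
    (ho : ∀ A B, m (.or A B) = .or (m A) (m B))
    (hb : m .bot = .bot)
    (h : IPCbProves A) : IPCbProves (m A) := by
  induction h with
  | ax h => exact h.elim
  | ipc h =>
    cases h <;> simp only [hi, ha, ho, hb] <;> exact .ipc (by constructor)
  | mp _ _ ih1 ih2 => rw [hi] at ih1; exact ih1.mp ih2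
  | nec hu _ => exact absurd hu (by simp)

end ProvesInfra

end PLHA

namespace PLHA

namespace Form

/-- occurrence of a variable. -/
def occb (n : ℕ) : Form → Bool
  | var m => m == n
  | bot => false
  | and A B => occb n A || occb n B
  | or A B => occb n A || occb n B
  | imp A B => occb n A || occb n B
  | box A => occb n A

theorem occb_lt_fvb {n : ℕ} : ∀ {X : Form}, occb n X = true → n < fvb X := by
  intro X
  induction X with
  | var m => simp [occb, fvb]; omega
  | bot => simp [occb]
  | and A B ihA ihB =>
    simp only [occb, Bool.or_eq_true, fvb, lt_max_iff]
    rintro (h | h); exacts [Or.inl (ihA h), Or.inr (ihB h)]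
  | or A B ihA ihB =>
    simp only [occb, Bool.or_eq_true, fvb, lt_max_iff]
    rintro (h | h); exacts [Or.inl (ihA h), Or.inr (ihB h)]
  | imp A B ihA ihB =>
    simp only [occb, Bool.or_eq_true, fvb, lt_max_iff]
    rintro (h | h); exacts [Or.inl (ihA h), Or.inr (ihB h)]
  | box A ihA => exact fun h => ihA h

end Form

open Form

theorem substF_ext {f g : ℕ → Form} :
    ∀ {X : Form}, (∀ n, occb n X = true → f n = g n) → substF f X = substF g X := by
  intro X
  induction X with
  | var m => intro h; exact h m (by simp [occb])
  | bot => intro _; rfl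
  | and A B ihA ihB =>
    intro h
    simp only [substF]
    rw [ihA (fun n hn => h n (by simp [occb, hn])), ihB (fun n hn => h n (by simp [occb, hn]))]
  | or A B ihA ihB =>
    intro h
    simp only [substF]
    rw [ihA (fun n hn => h n (by simp [occb, hn])), ihB (fun n hn => h n (by simp [occb, hn]))]
  | imp A B ihA ihB =>
    intro h
    simp only [substF]
    rw [ihA (fun n hn => h n (by simp [occb, hn])), ihB (fun n hn => h n (by simp [occb, hn]))]
  | box A ihA =>
    intro h
    simp only [substF]
    rw [ihA (fun n hn => h n hn)]

theorem substF_var : ∀ (X : Form), substF Form.var X = X := by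
  intro X
  induction X with
  | var m => rfl
  | bot => rfl
  | and A B ihA ihB => simp [substF, ihA, ihB]
  | or A B ihA ihB => simp [substF, ihA, ihB]
  | imp A B ihA ihB => simp [substF, ihA, ihB]
  | box A ihA => simp [substF, ihA]

theorem substF_id {f : ℕ → Form} {X : Form} (h : ∀ n, occb n X = true → f n = Form.var n) :
    substF f X = X := by
  rw [substF_ext h, substF_var]

theorem substF_comp (f g : ℕ → Form) :
    ∀ (X : Form), substF f (substF g X) = substF (fun n => substF f (g n)) X := by
  intro X
  induction X with
  | var m => rfl
  | bot => rfl
  | and A B ihA ihB => simp [substF, ihA, ihB]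
  | or A B ihA ihB => simp [substF, ihA, ihB]
  | imp A B ihA ihB => simp [substF, ihA, ihB]
  | box A ihA => simp [substF, ihA]

theorem occb_substF {f : ℕ → Form} {m : ℕ} :
    ∀ {X : Form}, occb m (substF f X) = true → ∃ n, occb n X = true ∧ occb m (f n) = true := by
  intro X
  induction X with
  | var k => intro h; exact ⟨k, by simp [occb], h⟩
  | bot => intro h; simp [substF, occb] at h
  | and A B ihA ihB =>
    simp only [substF, occb, Bool.or_eq_true]
    rintro (h | h)
    · obtain ⟨n, h1, h2⟩ := ihA h; exact ⟨n, Or.inl h1, h2⟩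
    · obtain ⟨n, h1, h2⟩ := ihB h; exact ⟨n, Or.inr h1, h2⟩
  | or A B ihA ihB =>
    simp only [substF, occb, Bool.or_eq_true]
    rintro (h | h)
    · obtain ⟨n, h1, h2⟩ := ihA h; exact ⟨n, Or.inl h1, h2⟩
    · obtain ⟨n, h1, h2⟩ := ihB h; exact ⟨n, Or.inr h1, h2⟩
  | imp A B ihA ihB =>
    simp only [substF, occb, Bool.or_eq_true]
    rintro (h | h)
    · obtain ⟨n, h1, h2⟩ := ihA h; exact ⟨n, Or.inl h1, h2⟩
    · obtain ⟨n, h1, h2⟩ := ihB h; exact ⟨n, Or.inr h1, h2⟩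
  | box A ihA => exact fun h => ihA h

theorem rho_substF {f : ℕ → Form} (hf : ∀ n, (f n).rho = 0) :
    ∀ (X : Form), (substF f X).rho ≤ X.rho := by
  intro X
  induction X with
  | var m => simp [substF, hf]
  | bot => simp [substF]
  | and A B ihA ihB => simp only [substF, rho]; exact max_le_max ihA ihB
  | or A B ihA ihB => simp only [substF, rho]; exact max_le_max ihA ihB
  | imp A B ihA ihB =>
    simp only [substF, rho]
    exact max_le_max (by omega) ihB
  | box A ihA => simp [substF, rho]

end PLHA

namespace PLHA

open Form

theorem strip_var {n k : ℕ} : strip (.var n) k = (.var n, []) := rfl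
theorem strip_bot {k : ℕ} : strip .bot k = (.bot, []) := rfl
theorem strip_box {A : Form} {k : ℕ} : strip (.box A) k = (.var k, [A]) := rfl
theorem strip_and {A B : Form} {k : ℕ} :
    strip (.and A B) k =
      (.and (strip A k).1 (strip B (k + (strip A k).2.length)).1,
        (strip A k).2 ++ (strip B (k + (strip A k).2.length)).2) := rfl
theorem strip_or {A B : Form} {k : ℕ} :
    strip (.or A B) k =
      (.or (strip A k).1 (strip B (k + (strip A k).2.length)).1,
        (strip A k).2 ++ (strip B (k + (strip A k).2.length)).2) := rfl
theorem strip_imp {A B : Form} {k : ℕ} :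
    strip (.imp A B) k =
      (.imp (strip A k).1 (strip B (k + (strip A k).2.length)).1,
        (strip A k).2 ++ (strip B (k + (strip A k).2.length)).2) := rfl

theorem strip_boxFree : ∀ (X : Form) (k : ℕ), boxFree (strip X k).1 = true := by
  intro X
  induction X with
  | var n => intro k; rfl
  | bot => intro k; rfl
  | and A B ihA ihB => intro k; simp [strip_and, boxFree, ihA, ihB]
  | or A B ihA ihB => intro k; simp [strip_or, boxFree, ihA, ihB]
  | imp A B ihA ihB => intro k; simp [strip_imp, boxFree, ihA, ihB]
  | box A _ => intro k; rfl

theorem strip_snd_indep : ∀ (X : Form) (k k' : ℕ), (strip X k).2 = (strip X k').2 := by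
  intro X
  induction X with
  | var n => intros; rfl
  | bot => intros; rfl
  | and A B ihA ihB =>
    intro k k'
    simp only [strip_and]
    rw [ihA k k', ihB (k + (strip A k').2.length) (k' + (strip A k').2.length)]
  | or A B ihA ihB =>
    intro k k'
    simp only [strip_or]
    rw [ihA k k', ihB (k + (strip A k').2.length) (k' + (strip A k').2.length)]
  | imp A B ihA ihB =>
    intro k k'
    simp only [strip_imp]
    rw [ihA k k', ihB (k + (strip A k').2.length) (k' + (strip A k').2.length)]
  | box A _ => intros; rfl

theorem strip_fst_occ : ∀ (X : Form) (k n : ℕ), fvb X ≤ k → occb n (strip X k).1 = true →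
    occb n X = true ∨ (k ≤ n ∧ n < k + (strip X k).2.length) := by
  intro X
  induction X with
  | var m => intro k n _ h; exact Or.inl h
  | bot => intro k n _ h; exact Or.inl h
  | and A B ihA ihB =>
    intro k n hk h
    simp only [fvb, max_le_iff] at hk
    simp only [strip_and, occb, Bool.or_eq_true] at h ⊢
    simp only [List.length_append]
    rcases h with h | h
    · rcases ihA k n hk.1 h with h | h
      · exact Or.inl (Or.inl h)
      · exact Or.inr ⟨h.1, by omega⟩
    · rcases ihB (k + (strip A k).2.length) n (le_trans hk.2 (by omega)) h with h | h
      · exact Or.inl (Or.inr h)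
      · exact Or.inr ⟨by omega, by omega⟩
  | or A B ihA ihB =>
    intro k n hk h
    simp only [fvb, max_le_iff] at hk
    simp only [strip_or, occb, Bool.or_eq_true] at h ⊢
    simp only [List.length_append]
    rcases h with h | h
    · rcases ihA k n hk.1 h with h | h
      · exact Or.inl (Or.inl h)
      · exact Or.inr ⟨h.1, by omega⟩
    · rcases ihB (k + (strip A k).2.length) n (le_trans hk.2 (by omega)) h with h | h
      · exact Or.inl (Or.inr h)
      · exact Or.inr ⟨by omega, by omega⟩
  | imp A B ihA ihB =>
    intro k n hk h
    simp only [fvb, max_le_iff] at hk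
    simp only [strip_imp, occb, Bool.or_eq_true] at h ⊢
    simp only [List.length_append]
    rcases h with h | h
    · rcases ihA k n hk.1 h with h | h
      · exact Or.inl (Or.inl h)
      · exact Or.inr ⟨h.1, by omega⟩
    · rcases ihB (k + (strip A k).2.length) n (le_trans hk.2 (by omega)) h with h | h
      · exact Or.inl (Or.inr h)
      · exact Or.inr ⟨by omega, by omega⟩
  | box A _ =>
    intro k n _ h
    simp only [strip_box, occb, beq_iff_eq] at h
    subst h
    exact Or.inr ⟨le_refl _, by simp [strip_box]⟩

theorem strip_snd_occ : ∀ (X : Form) (k : ℕ) (E : Form), E ∈ (strip X k).2 →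
    ∀ n, occb n E = true → occb n X = true := by
  intro X
  induction X with
  | var m => intro k E h; exact absurd h (List.not_mem_nil)
  | bot => intro k E h; exact absurd h (List.not_mem_nil)
  | and A B ihA ihB =>
    intro k E h n hn
    simp only [strip_and, List.mem_append] at h
    simp only [occb, Bool.or_eq_true]
    rcases h with h | h
    · exact Or.inl (ihA k E h n hn)
    · exact Or.inr (ihB _ E h n hn)
  | or A B ihA ihB =>
    intro k E h n hn
    simp only [strip_or, List.mem_append] at h
    simp only [occb, Bool.or_eq_true]
    rcases h with h | h
    · exact Or.inl (ihA k E h n hn)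
    · exact Or.inr (ihB _ E h n hn)
  | imp A B ihA ihB =>
    intro k E h n hn
    simp only [strip_imp, List.mem_append] at h
    simp only [occb, Bool.or_eq_true]
    rcases h with h | h
    · exact Or.inl (ihA k E h n hn)
    · exact Or.inr (ihB _ E h n hn)
  | box A _ =>
    intro k E h n hn
    simp only [strip_box, List.mem_singleton] at h
    subst h
    exact hn

theorem strip_snd_bdep : ∀ (X : Form) (k : ℕ) (E : Form), E ∈ (strip X k).2 →
    bdep E < bdep X := by
  intro X
  induction X with
  | var m => intro k E h; exact absurd h (List.not_mem_nil)
  | bot => intro k E h; exact absurd h (List.not_mem_nil)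
  | and A B ihA ihB =>
    intro k E h
    simp only [strip_and, List.mem_append] at h
    simp only [bdep, lt_max_iff]
    rcases h with h | h
    · exact Or.inl (ihA k E h)
    · exact Or.inr (ihB _ E h)
  | or A B ihA ihB =>
    intro k E h
    simp only [strip_or, List.mem_append] at h
    simp only [bdep, lt_max_iff]
    rcases h with h | h
    · exact Or.inl (ihA k E h)
    · exact Or.inr (ihB _ E h)
  | imp A B ihA ihB =>
    intro k E h
    simp only [strip_imp, List.mem_append] at h
    simp only [bdep, lt_max_iff]
    rcases h with h | h
    · exact Or.inl (ihA k E h)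
    · exact Or.inr (ihB _ E h)
  | box A _ =>
    intro k E h
    simp only [strip_box, List.mem_singleton] at h
    subst h
    simp [bdep]

/-- shifting the base of strip renames the fresh variables upwards. -/
theorem strip_fst_shift : ∀ (X : Form) (k₀ k : ℕ), fvb X ≤ k₀ → k₀ ≤ k →
    (strip X k).1 =
      substF (fun n => if k₀ ≤ n then .var (n + (k - k₀)) else .var n) (strip X k₀).1 := by
  intro X
  induction X with
  | var m =>
    intro k₀ k hf _
    simp only [strip_var, substF, fvb] at *
    rw [if_neg (by omega)]
  | bot => intro k₀ k _ _; rfl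
  | box A _ =>
    intro k₀ k _ hk
    simp only [strip_box, substF, if_pos (le_refl k₀)]
    congr 1
    omega
  | and A B ihA ihB =>
    intro k₀ k hf hk
    simp only [fvb, max_le_iff] at hf
    simp only [strip_and, substF]
    have hlen : (strip A k).2.length = (strip A k₀).2.length := by
      rw [strip_snd_indep A k k₀]
    congr 1
    · exact ihA k₀ k hf.1 hk
    · rw [ihB (k₀ + (strip A k₀).2.length) (k + (strip A k).2.length)
        (le_trans hf.2 (by omega)) (by omega)]
      apply substF_ext
      intro n hn
      rcases strip_fst_occ B _ n (le_trans hf.2 (by omega)) hn with h | h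
      · have := occb_lt_fvb h
        rw [if_neg (by omega), if_neg (by omega)]
      · rw [if_pos (by omega), if_pos (by omega)]
        congr 1
        omega
  | or A B ihA ihB =>
    intro k₀ k hf hk
    simp only [fvb, max_le_iff] at hf
    simp only [strip_or, substF]
    have hlen : (strip A k).2.length = (strip A k₀).2.length := by
      rw [strip_snd_indep A k k₀]
    congr 1
    · exact ihA k₀ k hf.1 hk
    · rw [ihB (k₀ + (strip A k₀).2.length) (k + (strip A k).2.length)
        (le_trans hf.2 (by omega)) (by omega)]
      apply substF_ext
      intro n hn
      rcases strip_fst_occ B _ n (le_trans hf.2 (by omega)) hn with h | h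
      · have := occb_lt_fvb h
        rw [if_neg (by omega), if_neg (by omega)]
      · rw [if_pos (by omega), if_pos (by omega)]
        congr 1
        omega
  | imp A B ihA ihB =>
    intro k₀ k hf hk
    simp only [fvb, max_le_iff] at hf
    simp only [strip_imp, substF]
    have hlen : (strip A k).2.length = (strip A k₀).2.length := by
      rw [strip_snd_indep A k k₀]
    congr 1
    · exact ihA k₀ k hf.1 hk
    · rw [ihB (k₀ + (strip A k₀).2.length) (k + (strip A k).2.length)
        (le_trans hf.2 (by omega)) (by omega)]
      apply substF_ext
      intro n hn
      rcases strip_fst_occ B _ n (le_trans hf.2 (by omega)) hn with h | h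
      · have := occb_lt_fvb h
        rw [if_neg (by omega), if_neg (by omega)]
      · rw [if_pos (by omega), if_pos (by omega)]
        congr 1
        omega

end PLHA

namespace PLHA

open Form

/-! ### the cleaned star operation -/

/-- `cstar star X`: the NNIL approximation with variables not occurring in `X` removed. -/
def cstar (star : Form → Form) (X : Form) : Form :=
  substF (fun n => if occb n X = true then .var n else .bot) (star X)

section CStar

variable {star : Form → Form} (hstar : IsNNILApproxOp star) (X : Form)

theorem occb_cstar {m : ℕ} {X : Form} (h : occb m (cstar star X) = true) :
    occb m X = true := by
  obtain ⟨n, h1, h2⟩ := occb_substF h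
  by_cases hn : occb n X = true
  · rw [if_pos hn] at h2
    simp only [occb, beq_iff_eq] at h2
    exact h2 ▸ hn
  · rw [if_neg hn] at h2
    simp [occb] at h2

include hstar

theorem cstar_nnil : NNILc (cstar star X) := by
  have h := (hstar X).1
  refine le_trans (rho_substF ?_ (star X)) h
  intro n
  split <;> rfl

theorem cstar_imp_self : IPCbProves (.imp (cstar star X) X) := by
  have h := ipcb_substF (fun n => if occb n X = true then .var n else .bot) (hstar X).2.1
  simp only [substF] at h
  rwa [substF_id (fun n hn => if_pos hn)] at h

theorem star_iff_cstar : IPCbProves (iffF (star X) (cstar star X)) := by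
  set N := max (fvb (star X)) (fvb X) with hN
  set κ' : ℕ → Form := fun n => if occb n X = true then .var n else .var (n + N) with hκ'
  set S' := substF κ' (star X) with hS'
  have hS'X : IPCbProves (.imp S' X) := by
    have h := ipcb_substF κ' (hstar X).2.1
    simp only [substF] at h
    rwa [substF_id (f := κ') (X := X) (fun n hn => by simp only [hκ', if_pos hn])] at h
  have hS'nnil : NNILc S' := by
    refine le_trans (rho_substF ?_ (star X)) (hstar X).1
    intro n; simp only [hκ']; split <;> rfl
  have hS'star : IPCbProves (.imp S' (star X)) := (hstar X).2.2 S' hS'nnil hS'X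
  set θ : ℕ → Form := fun n => if N ≤ n then .var (n - N)
    else if occb n X = true then .var n else .bot with hθ
  have hby : substF θ S' = star X := by
    rw [hS', substF_comp]
    apply substF_id
    intro n hn
    have hlt : n < N := lt_of_lt_of_le (occb_lt_fvb hn) (le_max_left _ _)
    by_cases hx : occb n X = true
    · simp only [hκ', if_pos hx, substF, hθ, if_neg (by omega : ¬ N ≤ n), if_pos hx]
    · simp only [hκ', if_neg hx, substF, hθ, if_pos (by omega : N ≤ n+N)]
      congr 1
      omega
  have hto : substF θ (star X) = cstar star X := by
    apply substF_ext
    intro n hn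
    have hlt : n < N := lt_of_lt_of_le (occb_lt_fvb hn) (le_max_left _ _)
    simp only [hθ, if_neg (by omega : ¬ N ≤ n)]
  have h2 := ipcb_substF θ hS'star
  simp only [substF] at h2
  rw [hby, hto] at h2
  exact pAndI h2 ((hstar X).2.2 _ (cstar_nnil hstar X) (cstar_imp_self hstar X))

theorem cstar_max {B : Form} (hB : NNILc B) (h : IPCbProves (.imp B X)) :
    IPCbProves (.imp B (cstar star X)) :=
  pImpTrans ((hstar X).2.2 B hB h) (pAndE1 (star_iff_cstar hstar X))

end CStar

end PLHA

namespace PLHA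

open Form

/-! ### the cleaned plus and minus operations -/

def cplus (star : Form → Form) : ℕ → Form → Form
  | 0, A => A
  | f+1, A =>
      substF (fun n =>
        if A.fvb ≤ n ∧ n < A.fvb + (strip A A.fvb).2.length then
          .box (cplus star f ((strip A A.fvb).2.getD (n - A.fvb) .bot))
        else .var n) (cstar star (strip A A.fvb).1)

def cplusC (star : Form → Form) (A : Form) : Form := cplus star (A.bdep + 1) A

def cminusC (star : Form → Form) : Form → Form
  | .var n => .var n
  | .bot => .bot
  | .and A B => .and (cminusC star A) (cminusC star B)
  | .or A B => .or (cminusC star A) (cminusC star B)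
  | .imp A B => .imp (cminusC star A) (cminusC star B)
  | .box A => .box (cplusC star A)

/-- the canonical plugging substitution. -/
def plugC (star : Form → Form) (k : ℕ) (L : List Form) : ℕ → Form := fun n =>
  if k ≤ n ∧ n < k + L.length then .box (cplusC star (L.getD (n - k) .bot)) else .var n

theorem cplus_succ (star : Form → Form) (f : ℕ) (A : Form) :
    cplus star (f+1) A = substF (fun n =>
      if A.fvb ≤ n ∧ n < A.fvb + (strip A A.fvb).2.length then
        .box (cplus star f ((strip A A.fvb).2.getD (n - A.fvb) .bot))
      else .var n) (cstar star (strip A A.fvb).1) := rfl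

theorem bdep_zero_boxFree : ∀ {X : Form}, bdep X = 0 → boxFree X = true := by
  intro X
  induction X with
  | var n => intro _; rfl
  | bot => intro _; rfl
  | and A B ihA ihB =>
    intro h
    simp only [bdep, Nat.max_eq_zero_iff] at h
    simp only [boxFree, Bool.and_eq_true]
    exact ⟨ihA h.1, ihB h.2⟩
  | or A B ihA ihB =>
    intro h
    simp only [bdep, Nat.max_eq_zero_iff] at h
    simp only [boxFree, Bool.and_eq_true]
    exact ⟨ihA h.1, ihB h.2⟩
  | imp A B ihA ihB =>
    intro h
    simp only [bdep, Nat.max_eq_zero_iff] at h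
    simp only [boxFree, Bool.and_eq_true]
    exact ⟨ihA h.1, ihB h.2⟩
  | box A _ => intro h; simp [bdep] at h

theorem boxFree_strip : ∀ (X : Form) (k : ℕ), boxFree X = true → strip X k = (X, []) := by
  intro X
  induction X with
  | var n => intros; rfl
  | bot => intros; rfl
  | and A B ihA ihB =>
    intro k h
    simp only [boxFree, Bool.and_eq_true] at h
    simp [strip_and, ihA k h.1, ihB k h.2]
  | or A B ihA ihB =>
    intro k h
    simp only [boxFree, Bool.and_eq_true] at h
    simp [strip_or, ihA k h.1, ihB k h.2]
  | imp A B ihA ihB =>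
    intro k h
    simp only [boxFree, Bool.and_eq_true] at h
    simp [strip_imp, ihA k h.1, ihB k h.2]
  | box A _ => intro k h; simp [boxFree] at h

theorem strip_getD_mem {X : Form} {k j : ℕ} (h : j < (strip X k).2.length) :
    (strip X k).2.getD j .bot ∈ (strip X k).2 := by
  rw [List.getD_eq_getElem _ _ h]
  exact List.getElem_mem h

theorem strip_getD_bdep {X : Form} {k j : ℕ} (h : j < (strip X k).2.length) :
    bdep ((strip X k).2.getD j .bot) < bdep X :=
  strip_snd_bdep X k _ (strip_getD_mem h)

theorem cplus_fuel (star : Form → Form) : ∀ (f f' : ℕ) (X : Form),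
    X.bdep ≤ f → X.bdep ≤ f' → cplus star (f+1) X = cplus star (f'+1) X := by
  intro f
  induction f with
  | zero =>
    intro f' X h _
    rw [cplus_succ, cplus_succ]
    congr 1
    funext n
    by_cases hr : X.fvb ≤ n ∧ n < X.fvb + (strip X X.fvb).2.length
    · exact absurd (strip_getD_bdep (X := X) (k := X.fvb) (j := n - X.fvb) (by omega)) (by omega)
    · rw [if_neg hr, if_neg hr]
  | succ g ih =>
    intro f' X h h'
    rw [cplus_succ, cplus_succ]
    congr 1
    funext n
    by_cases hr : X.fvb ≤ n ∧ n < X.fvb + (strip X X.fvb).2.length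
    · have hb := strip_getD_bdep (X := X) (k := X.fvb) (j := n - X.fvb) (by omega)
      cases f' with
      | zero => exact absurd hb (by omega)
      | succ g' =>
        rw [if_pos hr, if_pos hr]
        rw [ih g' _ (by omega) (by omega)]
    · rw [if_neg hr, if_neg hr]

theorem cplusC_unfold (star : Form → Form) (X : Form) :
    cplusC star X =
      substF (plugC star X.fvb (strip X X.fvb).2) (cstar star (strip X X.fvb).1) := by
  rw [cplusC, cplus_succ]
  congr 1
  funext n
  unfold plugC
  by_cases hr : X.fvb ≤ n ∧ n < X.fvb + (strip X X.fvb).2.length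
  · rw [if_pos hr, if_pos hr]
    have hb := strip_getD_bdep (X := X) (k := X.fvb) (j := n - X.fvb) (by omega)
    congr 1
    unfold cplusC
    have h1 : X.bdep = (X.bdep - 1) + 1 := by omega
    rw [h1]
    exact cplus_fuel star _ _ _ (by omega) (le_refl _)
  · rw [if_neg hr, if_neg hr]

theorem occb_cplus (star : Form → Form) : ∀ (f : ℕ) (X : Form) (n : ℕ),
    occb n (cplus star f X) = true → occb n X = true := by
  intro f
  induction f with
  | zero => intro X n h; exact h
  | succ g ih =>
    intro X n h
    rw [cplus_succ] at h
    obtain ⟨m, h1, h2⟩ := occb_substF h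
    have h1' := occb_cstar h1
    by_cases hr : X.fvb ≤ m ∧ m < X.fvb + (strip X X.fvb).2.length
    · rw [if_pos hr] at h2
      simp only [occb] at h2
      exact strip_snd_occ X X.fvb _ (strip_getD_mem (by omega)) n (ih _ _ h2)
    · rw [if_neg hr] at h2
      simp only [occb, beq_iff_eq] at h2
      subst h2
      rcases strip_fst_occ X X.fvb m (le_refl _) h1' with h | h
      · exact h
      · exact absurd h hr

theorem occb_cplusC (star : Form → Form) {X : Form} {n : ℕ}
    (h : occb n (cplusC star X) = true) : occb n X = true :=
  occb_cplus star _ X n h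

theorem homom (star : Form → Form) : ∀ (X : Form) (k : ℕ), fvb X ≤ k →
    substF (plugC star k (strip X k).2) (strip X k).1 = cminusC star X := by
  intro X
  induction X with
  | var n =>
    intro k hk
    simp only [strip_var, substF, cminusC, plugC]
    rw [if_neg (by simp only [fvb] at hk; omega)]
  | bot => intro k _; rfl
  | box A _ =>
    intro k hk
    simp only [strip_box, substF, cminusC, plugC, List.length_singleton]
    rw [if_pos (by omega)]
    simp
  | and A B ihA ihB =>
    intro k hk
    simp only [fvb, max_le_iff] at hk
    simp only [strip_and, substF, cminusC]
    congr 1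
    · rw [← ihA k hk.1]
      apply substF_ext
      intro n hn
      rcases strip_fst_occ A k n hk.1 hn with h | h
      · have := occb_lt_fvb h
        simp only [plugC, List.length_append]
        rw [if_neg (by omega), if_neg (by omega)]
      · simp only [plugC, List.length_append]
        rw [if_pos (by omega), if_pos (by omega)]
        rw [List.getD_append _ _ _ _ (by omega)]
    · rw [← ihB (k + (strip A k).2.length) (le_trans hk.2 (by omega))]
      apply substF_ext
      intro n hn
      rcases strip_fst_occ B _ n (le_trans hk.2 (by omega)) hn with h | h
      · have := occb_lt_fvb h
        simp only [plugC, List.length_append]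
        rw [if_neg (by omega), if_neg (by omega)]
      · simp only [plugC, List.length_append]
        rw [if_pos (by omega), if_pos (by omega)]
        rw [List.getD_append_right _ _ _ _ (by omega)]
        have hidx : n - k - (strip A k).2.length = n - (k + (strip A k).2.length) := by omega
        rw [hidx]
  | or A B ihA ihB =>
    intro k hk
    simp only [fvb, max_le_iff] at hk
    simp only [strip_or, substF, cminusC]
    congr 1
    · rw [← ihA k hk.1]
      apply substF_ext
      intro n hn
      rcases strip_fst_occ A k n hk.1 hn with h | h
      · have := occb_lt_fvb h
        simp only [plugC, List.length_append]
        rw [if_neg (by omega), if_neg (by omega)]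
      · simp only [plugC, List.length_append]
        rw [if_pos (by omega), if_pos (by omega)]
        rw [List.getD_append _ _ _ _ (by omega)]
    · rw [← ihB (k + (strip A k).2.length) (le_trans hk.2 (by omega))]
      apply substF_ext
      intro n hn
      rcases strip_fst_occ B _ n (le_trans hk.2 (by omega)) hn with h | h
      · have := occb_lt_fvb h
        simp only [plugC, List.length_append]
        rw [if_neg (by omega), if_neg (by omega)]
      · simp only [plugC, List.length_append]
        rw [if_pos (by omega), if_pos (by omega)]
        rw [List.getD_append_right _ _ _ _ (by omega)]
        have hidx : n - k - (strip A k).2.length = n - (k + (strip A k).2.length) := by omega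
        rw [hidx]
  | imp A B ihA ihB =>
    intro k hk
    simp only [fvb, max_le_iff] at hk
    simp only [strip_imp, substF, cminusC]
    congr 1
    · rw [← ihA k hk.1]
      apply substF_ext
      intro n hn
      rcases strip_fst_occ A k n hk.1 hn with h | h
      · have := occb_lt_fvb h
        simp only [plugC, List.length_append]
        rw [if_neg (by omega), if_neg (by omega)]
      · simp only [plugC, List.length_append]
        rw [if_pos (by omega), if_pos (by omega)]
        rw [List.getD_append _ _ _ _ (by omega)]
    · rw [← ihB (k + (strip A k).2.length) (le_trans hk.2 (by omega))]
      apply substF_ext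
      intro n hn
      rcases strip_fst_occ B _ n (le_trans hk.2 (by omega)) hn with h | h
      · have := occb_lt_fvb h
        simp only [plugC, List.length_append]
        rw [if_neg (by omega), if_neg (by omega)]
      · simp only [plugC, List.length_append]
        rw [if_pos (by omega), if_pos (by omega)]
        rw [List.getD_append_right _ _ _ _ (by omega)]
        have hidx : n - k - (strip A k).2.length = n - (k + (strip A k).2.length) := by omega
        rw [hidx]

end PLHA

namespace PLHA

open Form

section Congr

variable {Ax : Form → Prop}

theorem substF_iff_congr
    (hK : ∀ A B, Proves Ax true (.imp (.box (.imp A B)) (.imp (.box A) (.box B))))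
    {σ σ' : ℕ → Form} (hσ : ∀ n, Proves Ax true (iffF (σ n) (σ' n))) :
    ∀ X, Proves Ax true (iffF (substF σ X) (substF σ' X)) := by
  intro X
  induction X with
  | var n => exact hσ n
  | bot => exact pIffRefl
  | and A B ihA ihB => exact pIffAnd ihA ihB
  | or A B ihA ihB => exact pIffOr ihA ihB
  | imp A B ihA ihB => exact pIffImp ihA ihB
  | box A ihA => exact pBoxIff hK ihA

theorem extract (hAxN : ∀ X, Ax X → NNILc X) {A : Form} (h : Proves Ax true A) :
    ∃ C, NNILc C ∧ Proves Ax true C ∧ IPCbProves (.imp C A) := by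
  induction h with
  | ax h => exact ⟨_, hAxN _ h, .ax h, proves_impId⟩
  | ipc h =>
    refine ⟨Form.top, ?_, proves_impId, PrfH.toProves (PrfH.ded (PrfH.ipc h))⟩
    show Form.rho _ ≤ 1
    simp [Form.top, Form.rho]
  | mp hAB hA ihAB ihA =>
    obtain ⟨C1, n1, p1, i1⟩ := ihAB
    obtain ⟨C2, n2, p2, i2⟩ := ihA
    refine ⟨.and C1 C2, ?_, pAndI p1 p2, ?_⟩
    · show Form.rho _ ≤ 1
      exact max_le n1 n2
    · refine PrfH.toProves (PrfH.ded ?_)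
      exact PrfH.mp (PrfH.mp (.thm i1) PrfH.hyp0.andE1) (PrfH.mp (.thm i2) PrfH.hyp0.andE2)
  | nec hu hA ihA =>
    exact ⟨.box _, by show Form.rho _ ≤ 1; simp [Form.rho], .nec rfl hA, proves_impId⟩

end Congr

section Canon

variable {star : Form → Form} (hstar : IsNNILApproxOp star)
include hstar

theorem cstar_var (m : ℕ) : IPCbProves (iffF (cstar star (.var m)) (.var m)) :=
  pAndI (cstar_imp_self hstar _)
    (cstar_max hstar _ (by show Form.rho _ ≤ 1; simp [Form.rho]) proves_impId)

theorem canon : ∀ (X : Form) (k : ℕ), fvb X ≤ k →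
    IPCbProves (iffF (substF (plugC star k (strip X k).2) (cstar star (strip X k).1))
      (cplusC star X)) := by
  intro X k hk
  set k₀ := fvb X with hk₀
  set L := (strip X k₀).2 with hL
  have hLk : (strip X k).2 = L := strip_snd_indep X k k₀
  set δ := k - k₀ with hδ
  set r : ℕ → Form := fun n => if k₀ ≤ n then .var (n + δ) else .var n with hr
  set r' : ℕ → Form := fun n => if k ≤ n then .var (n - δ) else .var n with hr'
  set X0 := (strip X k₀).1 with hX0
  have hshift : (strip X k).1 = substF r X0 := strip_fst_shift X k₀ k (le_refl _) hk
  set S0 := cstar star X0 with hS0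
  set Sk := cstar star (strip X k).1 with hSk
  -- direction 1 : substF r S0 → Sk
  have h1 : IPCbProves (.imp (substF r S0) Sk) := by
    apply cstar_max hstar
    · refine le_trans (rho_substF ?_ _) (cstar_nnil hstar X0)
      intro n; simp only [hr]; split <;> rfl
    · have h := ipcb_substF r (cstar_imp_self hstar X0)
      simp only [substF] at h
      rwa [← hshift] at h
  -- direction 2 : substF r' Sk → S0
  have hback : substF r' (strip X k).1 = X0 := by
    rw [hshift, substF_comp]
    apply substF_id
    intro n hn
    rcases strip_fst_occ X k₀ n (le_refl _) hn with h | h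
    · have hnk : n < k₀ := occb_lt_fvb h
      simp only [hr, hr', if_neg (by omega : ¬ k₀ ≤ n), substF, if_neg (by omega : ¬ k ≤ n)]
    · simp only [hr, hr', if_pos (by omega : k₀ ≤ n), substF, if_pos (by omega : k ≤ n + δ)]
      congr 1
      omega
  have h2 : IPCbProves (.imp (substF r' Sk) S0) := by
    apply cstar_max hstar
    · refine le_trans (rho_substF ?_ _) (cstar_nnil hstar _)
      intro n; simp only [hr']; split <;> rfl
    · have h := ipcb_substF r' (cstar_imp_self hstar (strip X k).1)
      simp only [substF] at h
      rwa [hback] at h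
  -- substitute the plugging substitutions
  have dir1 : IPCbProves (.imp (cplusC star X) (substF (plugC star k L) Sk)) := by
    have h := ipcb_substF (plugC star k L) h1
    simp only [substF] at h
    rw [substF_comp] at h
    rw [cplusC_unfold]
    have he : substF (fun n => substF (plugC star k L) (r n)) S0
        = substF (plugC star k₀ (strip X k₀).2) S0 := by
      apply substF_ext
      intro n hn
      have hLL : L.length = (strip X k₀).2.length := by rw [hL]
      have hn' := occb_cstar hn
      rcases strip_fst_occ X k₀ n (le_refl _) hn' with h' | h'
      · have hnk : n < k₀ := occb_lt_fvb h'
        simp only [hr, if_neg (by omega : ¬ k₀ ≤ n), substF, plugC]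
        rw [if_neg (by omega), if_neg (by omega)]
      · rw [← hL] at h'
        simp only [hr, if_pos (by omega : k₀ ≤ n), substF, plugC]
        rw [if_pos (by omega), if_pos (by omega)]
        have hidx : n + δ - k = n - k₀ := by omega
        rw [hidx]
    rw [he] at h
    exact h
  have dir2 : IPCbProves (.imp (substF (plugC star k L) Sk) (cplusC star X)) := by
    have h := ipcb_substF (plugC star k₀ L) h2
    simp only [substF] at h
    rw [substF_comp] at h
    rw [cplusC_unfold]
    have he : substF (fun n => substF (plugC star k₀ L) (r' n)) Sk
        = substF (plugC star k L) Sk := by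
      apply substF_ext
      intro n hn
      have hLL : L.length = (strip X k₀).2.length := by rw [hL]
      have hn' := occb_cstar hn
      rcases strip_fst_occ X k n hk hn' with h' | h'
      · have hnk : n < k₀ := occb_lt_fvb h'
        simp only [hr', if_neg (by omega : ¬ k ≤ n), substF, plugC]
        rw [if_neg (by omega), if_neg (by omega)]
      · rw [hLk] at h'
        simp only [hr', if_pos (by omega : k ≤ n), substF, plugC]
        rw [if_pos (by omega), if_pos (by omega)]
        have hidx : n - δ - k₀ = n - k := by omega
        rw [hidx]
    rw [he] at h
    exact h
  rw [hLk]
  exact pAndI dir2 dir1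

theorem cplusC_box (A : Form) :
    IPCbProves (iffF (cplusC star (.box A)) (.box (cplusC star A))) := by
  have hstrip : strip (Form.box A) (Form.box A).fvb = (.var (Form.box A).fvb, [A]) := rfl
  have hunf := cplusC_unfold star (.box A)
  rw [hstrip] at hunf
  dsimp only at hunf
  have h := ipcb_substF (plugC star (Form.box A).fvb [A]) (cstar_var hstar ((Form.box A).fvb))
  simp only [iffF, substF] at h
  have hplug : plugC star (Form.box A).fvb [A] (Form.box A).fvb = .box (cplusC star A) := by
    unfold plugC
    rw [if_pos ⟨le_refl _, by simp⟩]
    simp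
  rw [hplug] at h
  rw [hunf]
  exact h

end Canon

end PLHA

namespace PLHA

open Form

/-! ### abstraction of listed boxes and the crux lemma -/

def absF (Q : List Form) (K : ℕ) : Form → Form
  | .var n => .var n
  | .bot => .bot
  | .and A B => .and (absF Q K A) (absF Q K B)
  | .or A B => .or (absF Q K A) (absF Q K B)
  | .imp A B => .imp (absF Q K A) (absF Q K B)
  | .box A => if A ∈ Q then .var (K + Q.idxOf A) else .box (absF Q K A)

theorem rho_absF (Q : List Form) (K : ℕ) : ∀ X, (absF Q K X).rho = X.rho := by
  intro X
  induction X with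
  | var n => rfl
  | bot => rfl
  | and A B ihA ihB => simp [absF, rho, ihA, ihB]
  | or A B ihA ihB => simp [absF, rho, ihA, ihB]
  | imp A B ihA ihB => simp [absF, rho, ihA, ihB]
  | box A _ => simp only [absF, rho]; split <;> rfl

theorem getD_mem_of_lt {Q : List Form} {j : ℕ} (h : j < Q.length) : Q.getD j .bot ∈ Q := by
  rw [List.getD_eq_getElem _ _ h]
  exact List.getElem_mem h

theorem absF_getD_indexOf {Q : List Form} {A : Form} (hA : A ∈ Q) :
    Q.getD (Q.idxOf A) .bot = A := by
  rw [List.getD_eq_getElem _ _ (List.idxOf_lt_length_iff.2 hA)]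
  exact List.getElem_idxOf _

theorem absF_theta {Q : List Form} {K : ℕ} {Θ : ℕ → Form}
    (hfix : ∀ A ∈ Q, substF Θ A = A)
    (hidx : ∀ A ∈ Q, Θ (K + Q.idxOf A) = .box A) :
    ∀ X, substF Θ (absF Q K X) = substF Θ X := by
  intro X
  induction X with
  | var n => rfl
  | bot => rfl
  | and A B ihA ihB => simp only [absF, substF, ihA, ihB]
  | or A B ihA ihB => simp only [absF, substF, ihA, ihB]
  | imp A B ihA ihB => simp only [absF, substF, ihA, ihB]
  | box A ih =>
    by_cases hA : A ∈ Q
    · simp only [absF, if_pos hA, substF]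
      rw [hidx A hA, hfix A hA]
    · simp only [absF, if_neg hA, substF, ih]

theorem absF_substF_bf (Q : List Form) (K : ℕ) (σ : ℕ → Form) :
    ∀ X, boxFree X = true → absF Q K (substF σ X) = substF (fun n => absF Q K (σ n)) X := by
  intro X
  induction X with
  | var n => intro _; rfl
  | bot => intro _; rfl
  | and A B ihA ihB =>
    intro h
    simp only [boxFree, Bool.and_eq_true] at h
    simp only [substF, absF, ihA h.1, ihB h.2]
  | or A B ihA ihB =>
    intro h
    simp only [boxFree, Bool.and_eq_true] at h
    simp only [substF, absF, ihA h.1, ihB h.2]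
  | imp A B ihA ihB =>
    intro h
    simp only [boxFree, Bool.and_eq_true] at h
    simp only [substF, absF, ihA h.1, ihB h.2]
  | box A _ => intro h; simp [boxFree] at h

theorem substF_iff_congr_bf {Ax : Form → Prop} {u : Bool} {Γ : List Form} {σ σ' : ℕ → Form}
    (hσ : ∀ n, PrfH Ax u Γ (iffF (σ n) (σ' n))) :
    ∀ X, boxFree X = true → PrfH Ax u Γ (iffF (substF σ X) (substF σ' X)) := by
  intro X
  induction X with
  | var n => intro _; exact hσ n
  | bot => intro _; exact .thm pIffRefl
  | and A B ihA ihB =>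
    intro h
    simp only [boxFree, Bool.and_eq_true] at h
    exact PrfH.iffAnd (ihA h.1) (ihB h.2)
  | or A B ihA ihB =>
    intro h
    simp only [boxFree, Bool.and_eq_true] at h
    exact PrfH.iffOr (ihA h.1) (ihB h.2)
  | imp A B ihA ihB =>
    intro h
    simp only [boxFree, Bool.and_eq_true] at h
    exact PrfH.iffImp (ihA h.1) (ihB h.2)
  | box A _ => intro h; simp [boxFree] at h

/-- the plugging substitution determined by a list of box bodies. -/
def sigQ (k : ℕ) (Q : List Form) : ℕ → Form := fun n =>
  if k ≤ n ∧ n < k + Q.length then .box (Q.getD (n - k) .bot) else .var n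

theorem crux {star : Form → Form} (hstar : IsNNILApproxOp star) {Ax : Form → Prop}
    (hAxN : ∀ X, Ax X → NNILc X)
    (hAxS : ∀ (f : ℕ → Form) (X : Form), Ax X → Ax (substF f X))
    {k : ℕ} {X' : Form} {Q : List Form}
    (hbf : boxFree X' = true)
    (hQ : ∀ A ∈ Q, ∀ n, occb n A = true → n < k)
    (hprem : Proves Ax true (substF (sigQ k Q) X')) :
    Proves Ax true (substF (sigQ k Q) (cstar star X')) := by
  obtain ⟨C, hCn, hCp, hCi⟩ := extract hAxN hprem
  set K := max (k + Q.length) (fvb (cstar star X')) with hK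
  have hkK : k + Q.length ≤ K := le_max_left _ _
  have hfK : fvb (cstar star X') ≤ K := le_max_right _ _
  set τ : ℕ → Form := fun n => absF Q K (sigQ k Q n) with hτ
  -- the abstracted implication
  have habs : IPCbProves (.imp (absF Q K C) (substF τ X')) := by
    have h := ipcb_map (absF Q K) (fun _ _ => rfl) (fun _ _ => rfl) (fun _ _ => rfl) rfl hCi
    simp only [absF] at h
    rwa [absF_substF_bf Q K _ X' hbf] at h
  -- the list of linking equivalences
  set EqL : List Form := (List.range Q.length).map
    (fun j => iffF (.var (k + j)) (τ (k + j))) with hEqL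
  set E := listConj EqL with hE
  have hτrho : ∀ n, (τ n).rho = 0 := by
    intro n
    simp only [hτ, sigQ]
    split
    · rw [rho_absF]; rfl
    · rfl
  have hpoint : ∀ n, PrfH (fun _ => False) false [E] (iffF (.var n) (τ n)) := by
    intro n
    by_cases hr : k ≤ n ∧ n < k + Q.length
    · have hmem : iffF (.var n) (τ n) ∈ EqL := by
        rw [hEqL]
        refine List.mem_map.2 ⟨n - k, List.mem_range.2 (by omega), ?_⟩
        have : k + (n - k) = n := by omega
        rw [this]
      exact PrfH.mp (.thm (listConj_elim hmem)) PrfH.hyp0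
    · have : τ n = .var n := by simp only [hτ, sigQ, if_neg hr]; rfl
      rw [this]
      exact .thm pIffRefl
  have hbridge : PrfH (fun _ => False) false [E] (iffF X' (substF τ X')) := by
    have h := substF_iff_congr_bf (σ := Form.var) (σ' := τ) hpoint X' hbf
    rwa [substF_var] at h
  -- the strong NNIL hypothesis
  set D := Form.and (absF Q K C) E with hD
  have hDX' : IPCbProves (.imp D X') := by
    refine PrfH.toProves (PrfH.ded ?_)
    have hEd : PrfH (fun _ => False) false [D] E := PrfH.hyp0.andE2
    have hb := PrfH.cut hbridge hEd
    have ha : PrfH (fun _ => False) false [D] (substF τ X') :=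
      PrfH.mp (.thm habs) PrfH.hyp0.andE1
    exact PrfH.mp hb.iffE2 ha
  have hDn : NNILc D := by
    show Form.rho _ ≤ 1
    refine max_le ?_ ?_
    · rw [rho_absF]; exact hCn
    · refine rho_listConj ?_
      intro F hF
      rw [hEqL] at hF
      obtain ⟨j, _, rfl⟩ := List.mem_map.1 hF
      show Form.rho (iffF _ _) ≤ 1
      simp only [iffF, rho, hτrho]
      simp [rho]
  have hDstar : IPCbProves (.imp D (cstar star X')) := cstar_max hstar _ hDn hDX'
  -- the final substitution
  set Θ : ℕ → Form := fun n =>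
    if k ≤ n ∧ n < k + Q.length then .box (Q.getD (n - k) .bot)
    else if K ≤ n ∧ n < K + Q.length then .box (Q.getD (n - K) .bot)
    else .var n with hΘ
  have hθ := ipcb_substF Θ hDstar
  simp only [substF] at hθ
  have hcs : substF Θ (cstar star X') = substF (sigQ k Q) (cstar star X') := by
    apply substF_ext
    intro n hn
    have hlt : n < K := lt_of_lt_of_le (occb_lt_fvb hn) hfK
    simp only [hΘ, sigQ]
    by_cases hr : k ≤ n ∧ n < k + Q.length
    · rw [if_pos hr, if_pos hr]
    · rw [if_neg hr, if_neg (by omega), if_neg hr]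
  have habsorb : substF Θ (absF Q K C) = substF Θ C := by
    refine absF_theta ?_ ?_ C
    · intro A hA
      apply substF_id
      intro n hn
      have hnk : n < k := hQ A hA n hn
      simp only [hΘ]
      rw [if_neg (by omega), if_neg (by omega)]
    · intro A hA
      have hidx : Q.idxOf A < Q.length := List.idxOf_lt_length_iff.2 hA
      simp only [hΘ]
      rw [if_neg (by omega), if_pos (by omega)]
      have h1 : K + Q.idxOf A - K = Q.idxOf A := by omega
      rw [h1, absF_getD_indexOf hA]
  have hEθ : Proves Ax true (substF Θ E) := by
    rw [hE, substF_listConj]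
    apply listConj_intro
    intro F hF
    obtain ⟨G, hG, rfl⟩ := List.mem_map.1 hF
    rw [hEqL] at hG
    obtain ⟨j, hj, rfl⟩ := List.mem_map.1 hG
    have hj' : j < Q.length := List.mem_range.1 hj
    set A := Q.getD j .bot with hA
    have hAQ : A ∈ Q := getD_mem_of_lt hj'
    have h1 : substF Θ (.var (k + j)) = .box A := by
      simp only [substF, hΘ]
      rw [if_pos (by omega)]
      have : k + j - k = j := by omega
      rw [this]
    have h2 : substF Θ (τ (k + j)) = .box A := by
      have hsig : sigQ k Q (k + j) = .box A := by
        simp only [sigQ]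
        rw [if_pos (by omega)]
        have : k + j - k = j := by omega
        rw [this]
      simp only [hτ, hsig, absF, if_pos hAQ, substF, hΘ]
      have hidx : Q.idxOf A < Q.length := List.idxOf_lt_length_iff.2 hAQ
      rw [if_neg (by omega), if_pos (by omega)]
      have h3 : K + Q.idxOf A - K = Q.idxOf A := by omega
      rw [h3, absF_getD_indexOf hAQ]
    show Proves Ax true (substF Θ (iffF _ _))
    have hiff : substF Θ (iffF (.var (k + j)) (τ (k + j)))
        = iffF (substF Θ (.var (k + j))) (substF Θ (τ (k + j))) := rfl
    rw [hiff, h1, h2]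
    exact pIffRefl
  have hCθ : Proves Ax true (substF Θ C) := proves_substF hAxS Θ hCp
  have hfin := (ipcb_to hθ).mp (pAndI (by rw [habsorb]; exact hCθ) hEθ)
  rwa [hcs] at hfin

end PLHA

namespace PLHA

open Form

section Cases

variable {Ax : Form → Prop} {u : Bool}

/-- replace antecedent/consequent of a curried implication by equivalents. -/
theorem pImpImpCong {P S T S' T' : Form}
    (h : Proves Ax u (.imp P (.imp S T)))
    (hS : Proves Ax u (iffF S' S)) (hT : Proves Ax u (iffF T T')) :
    Proves Ax u (.imp P (.imp S' T')) := by
  refine PrfH.toProves (PrfH.ded (PrfH.ded ?_))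
  refine PrfH.mp (.thm (pAndE1 hT)) ?_
  refine PrfH.mp (PrfH.mp (.thm h) (PrfH.hyp (by simp))) ?_
  exact PrfH.mp (.thm (pAndE1 hS)) PrfH.hyp0

variable {star : Form → Form} (hstar : IsNNILApproxOp star)
include hstar

/-- the IPC core fact : cstar of an implication implies the implication of cstars. -/
theorem cstar_imp_core (X Y : Form) :
    IPCbProves (.imp (cstar star (.imp X Y)) (.imp (cstar star X) (cstar star Y))) := by
  have hD : IPCbProves (.imp (.and (cstar star (.imp X Y)) (cstar star X)) Y) := by
    refine PrfH.toProves (PrfH.ded ?_)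
    exact PrfH.mp (PrfH.mp (.thm (cstar_imp_self hstar _)) PrfH.hyp0.andE1)
      (PrfH.mp (.thm (cstar_imp_self hstar _)) PrfH.hyp0.andE2)
  have hDs : IPCbProves (.imp (.and (cstar star (.imp X Y)) (cstar star X)) (cstar star Y)) := by
    refine cstar_max hstar _ ?_ hD
    show Form.rho _ ≤ 1
    exact max_le (cstar_nnil hstar _) (cstar_nnil hstar _)
  refine PrfH.toProves (PrfH.ded (PrfH.ded ?_))
  exact PrfH.mp (.thm hDs) (PrfH.andI (PrfH.hyp (by simp)) PrfH.hyp0)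

/-- similarly with a variable antecedent. -/
theorem cstar_var_imp_core (m : ℕ) (Y : Form) :
    IPCbProves (.imp (cstar star (.imp (.var m) Y)) (.imp (.var m) (cstar star Y))) := by
  have hD : IPCbProves (.imp (.and (cstar star (.imp (.var m) Y)) (.var m)) Y) := by
    refine PrfH.toProves (PrfH.ded ?_)
    exact PrfH.mp (PrfH.mp (.thm (cstar_imp_self hstar _)) PrfH.hyp0.andE1) PrfH.hyp0.andE2
  have hDs : IPCbProves (.imp (.and (cstar star (.imp (.var m) Y)) (.var m)) (cstar star Y)) := by
    refine cstar_max hstar _ ?_ hD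
    show Form.rho _ ≤ 1
    refine max_le (cstar_nnil hstar _) ?_
    show Form.rho (Form.var m) ≤ 1
    simp [Form.rho]
  refine PrfH.toProves (PrfH.ded (PrfH.ded ?_))
  exact PrfH.mp (.thm hDs) (PrfH.andI (PrfH.hyp (by simp)) PrfH.hyp0)

/-- the core equivalence used for the K and Löb axioms. -/
theorem cplusC_imp_core (A B : Form) :
    IPCbProves (.imp (cplusC star (.imp A B))
      (.imp (cplusC star A) (cplusC star B))) := by
  set k := (Form.imp A B).fvb with hkdef
  have hfA : fvb A ≤ k := le_max_left _ _
  set A1 := (strip A k).1 with hA1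
  set La := (strip A k).2 with hLa
  have hfB' : fvb B ≤ k := le_max_right _ _
  have hfB : fvb B ≤ k + La.length := le_trans hfB' (Nat.le_add_right _ _)
  set B1 := (strip B (k + La.length)).1 with hB1
  set Lb := (strip B (k + La.length)).2 with hLb
  have hstr : strip (.imp A B) k = (.imp A1 B1, La ++ Lb) := strip_imp
  set Sg : ℕ → Form := plugC star k (La ++ Lb) with hSg
  have hmax := ipcb_substF Sg (cstar_imp_core hstar A1 B1)
  simp only [substF] at hmax
  have e1 : substF Sg (cstar star (.imp A1 B1)) = cplusC star (.imp A B) := by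
    rw [cplusC_unfold star (.imp A B), ← hkdef, hstr]
  have e2 : substF Sg (cstar star A1) = substF (plugC star k La) (cstar star A1) := by
    apply substF_ext
    intro n hn
    have hn' := occb_cstar hn
    rcases strip_fst_occ A k n hfA hn' with h' | h'
    · have := occb_lt_fvb h'
      simp only [hSg, plugC, List.length_append]
      rw [if_neg (by omega), if_neg (by omega)]
    · rw [← hLa] at h'
      simp only [hSg, plugC, List.length_append]
      rw [if_pos (by omega), if_pos (by omega)]
      rw [List.getD_append _ _ _ _ (by omega)]
  have e3 : substF Sg (cstar star B1) = substF (plugC star (k + La.length) Lb) (cstar star B1) := by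
    apply substF_ext
    intro n hn
    have hn' := occb_cstar hn
    rcases strip_fst_occ B (k + La.length) n hfB hn' with h' | h'
    · have := occb_lt_fvb h'
      simp only [hSg, plugC, List.length_append]
      rw [if_neg (by omega), if_neg (by omega)]
    · rw [← hLb] at h'
      simp only [hSg, plugC, List.length_append]
      rw [if_pos (by omega), if_pos (by omega)]
      rw [List.getD_append_right _ _ _ _ (by omega)]
      have hidx : n - k - La.length = n - (k + La.length) := by omega
      rw [hidx]
  have cA := canon hstar A k hfA
  rw [← hA1, ← hLa] at cA
  have cB := canon hstar B (k + La.length) hfB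
  rw [← hB1, ← hLb] at cB
  rw [e1, e2, e3] at hmax
  exact pImpImpCong hmax (pIffSymm cA) cB

/-- the core equivalence used for the Löb axiom. -/
theorem cplusC_lob_core (A : Form) :
    IPCbProves (.imp (cplusC star (.imp (.box A) A))
      (.imp (.box (cplusC star A)) (cplusC star A))) := by
  set k := (Form.imp (Form.box A) A).fvb with hkdef
  have hfA : fvb A ≤ k := le_max_right _ _
  set A1 := (strip A (k + 1)).1 with hA1
  set La := (strip A (k + 1)).2 with hLa
  have hstr : strip (.imp (.box A) A) k = (.imp (.var k) A1, A :: La) := by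
    simp only [strip_imp, strip_box, List.length_singleton, List.singleton_append]
    rfl
  set Sg : ℕ → Form := plugC star k (A :: La) with hSg
  have hmax := ipcb_substF Sg (cstar_var_imp_core hstar k A1)
  simp only [substF] at hmax
  have e1 : substF Sg (cstar star (.imp (.var k) A1)) = cplusC star (.imp (.box A) A) := by
    rw [cplusC_unfold star (.imp (.box A) A), ← hkdef, hstr]
  have eSgk : Sg k = .box (cplusC star A) := by
    simp only [hSg, plugC, List.length_cons]
    rw [if_pos (by omega)]
    simp
  have e3 : substF Sg (cstar star A1) = substF (plugC star (k + 1) La) (cstar star A1) := by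
    apply substF_ext
    intro n hn
    have hn' := occb_cstar hn
    rcases strip_fst_occ A (k + 1) n (by omega) hn' with h' | h'
    · have := occb_lt_fvb h'
      simp only [hSg, plugC, List.length_cons]
      rw [if_neg (by omega), if_neg (by omega)]
    · rw [← hLa] at h'
      simp only [hSg, plugC, List.length_cons]
      rw [if_pos (by omega), if_pos (by omega)]
      have hidx : n - k = (n - (k + 1)) + 1 := by omega
      rw [hidx]
      simp
  have cA := canon hstar A (k + 1) (by omega)
  rw [← hA1, ← hLa] at cA
  rw [e1, eSgk, e3] at hmax
  exact pImpImpCong hmax pIffRefl cA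

end Cases

section Master

variable {star : Form → Form} (hstar : IsNNILApproxOp star) {Ax : Form → Prop}
variable (hAxN : ∀ X, Ax X → NNILc X)
variable (hAxS : ∀ (f : ℕ → Form) (X : Form), Ax X → Ax (substF f X))
variable (hK : ∀ A B, Proves Ax true (.imp (.box (.imp A B)) (.imp (.box A) (.box B))))

theorem cminusC_ipc {A : Form} (h : IpcAx A) : IpcAx (cminusC star A) := by
  cases h <;> simp only [cminusC] <;> constructor

include hstar hAxN hAxS in
theorem plus_of_minus {B : Form} (h : Proves Ax true (cminusC star B)) :
    Proves Ax true (cplusC star B) := by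
  set k := fvb B with hk
  set L := (strip B k).2 with hL
  set Q := L.map (cplusC star) with hQdef
  have hplug : plugC star k L = sigQ k Q := by
    funext n
    simp only [plugC, sigQ, hQdef, List.length_map]
    by_cases hr : k ≤ n ∧ n < k + L.length
    · rw [if_pos hr, if_pos hr]
      congr 1
      rw [List.getD_eq_getElem (List.map (cplusC star) L) Form.bot
          (by rw [List.length_map]; omega), List.getElem_map,
        ← List.getD_eq_getElem _ _ (by omega)]
    · rw [if_neg hr, if_neg hr]
  have hQocc : ∀ A ∈ Q, ∀ n, occb n A = true → n < k := by
    intro A hA n hn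
    obtain ⟨E, hE, rfl⟩ := List.mem_map.1 hA
    rw [hL] at hE
    exact occb_lt_fvb (strip_snd_occ B k E hE n (occb_cplusC star hn))
  have hprem : Proves Ax true (substF (sigQ k Q) (strip B k).1) := by
    rw [← hplug]
    have hh := homom star B k (le_refl _)
    rw [← hL] at hh
    rw [hh]
    exact h
  have hcon := crux hstar hAxN hAxS (strip_boxFree B k) hQocc hprem
  rw [← hplug] at hcon
  have hunf := cplusC_unfold star B
  rw [← hk, ← hL] at hunf
  rw [hunf]
  exact hcon

include hstar hAxN hAxS in
theorem minus_pres (hMin : ∀ X, Ax X → Proves Ax true (cminusC star X))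
    {B : Form} (h : Proves Ax true B) : Proves Ax true (cminusC star B) := by
  induction h with
  | ax h => exact hMin _ h
  | ipc h => exact .ipc (cminusC_ipc h)
  | @mp A B h1 h2 ih1 ih2 =>
    exact (ih1 : Proves Ax true (.imp (cminusC star A) (cminusC star B))).mp ih2
  | nec hu h ih => exact .nec rfl (plus_of_minus hstar hAxN hAxS ih)

include hstar hAxN hAxS in
theorem plus_pres (hMin : ∀ X, Ax X → Proves Ax true (cminusC star X))
    {B : Form} (h : Proves Ax true B) : Proves Ax true (cplusC star B) :=
  plus_of_minus hstar hAxN hAxS (minus_pres hstar hAxN hAxS hMin h)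

include hstar hK in
theorem case_k (A B : Form) :
    Proves Ax true (cminusC star (.imp (.box (.imp A B)) (.imp (.box A) (.box B)))) := by
  show Proves Ax true (.imp (.box (cplusC star (.imp A B)))
    (.imp (.box (cplusC star A)) (.box (cplusC star B))))
  exact pImpTrans (pBoxMono hK (ipcb_to (cplusC_imp_core hstar A B))) (hK _ _)

include hstar hK in
theorem case_4 (h4 : ∀ A, Proves Ax true (.imp (.box A) (.box (.box A)))) (A : Form) :
    Proves Ax true (cminusC star (.imp (.box A) (.box (.box A)))) := by
  show Proves Ax true (.imp (.box (cplusC star A)) (.box (cplusC star (.box A))))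
  have hb : Proves Ax true (iffF (.box (.box (cplusC star A))) (.box (cplusC star (.box A)))) :=
    pBoxIff hK (pIffSymm (ipcb_to (cplusC_box hstar A)))
  exact pImpTrans (h4 (cplusC star A)) (pAndE1 hb)

include hstar hK in
theorem case_lob (hLob : ∀ A, Proves Ax true (.imp (.box (.imp (.box A) A)) (.box A)))
    (A : Form) :
    Proves Ax true (cminusC star (.imp (.box (.imp (.box A) A)) (.box A))) := by
  show Proves Ax true (.imp (.box (cplusC star (.imp (.box A) A))) (.box (cplusC star A)))
  exact pImpTrans (pBoxMono hK (ipcb_to (cplusC_lob_core hstar A))) (hLob _)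

end Master

end PLHA

namespace PLHA

open Form

theorem plusAux_succ (star : Form → Form) (f : ℕ) (A : Form) :
    plusAux star (f+1) A = substF (fun n =>
      if A.fvb ≤ n ∧ n < A.fvb + (strip A A.fvb).2.length then
        .box (plusAux star f ((strip A A.fvb).2.getD (n - A.fvb) .bot))
      else .var n) (star (strip A A.fvb).1) := rfl

theorem plusAux_iff {star : Form → Form} (hstar : IsNNILApproxOp star) {Ax : Form → Prop}
    (hK : ∀ A B, Proves Ax true (.imp (.box (.imp A B)) (.imp (.box A) (.box B)))) :
    ∀ (f : ℕ) (A : Form), Proves Ax true (iffF (plusAux star f A) (cplus star f A)) := by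
  intro f
  induction f with
  | zero => intro A; exact pIffRefl
  | succ g ih =>
    intro A
    rw [plusAux_succ, cplus_succ]
    set σp : ℕ → Form := fun n =>
      if A.fvb ≤ n ∧ n < A.fvb + (strip A A.fvb).2.length then
        .box (plusAux star g ((strip A A.fvb).2.getD (n - A.fvb) .bot))
      else .var n with hσp
    set σc : ℕ → Form := fun n =>
      if A.fvb ≤ n ∧ n < A.fvb + (strip A A.fvb).2.length then
        .box (cplus star g ((strip A A.fvb).2.getD (n - A.fvb) .bot))
      else .var n with hσc
    have T1 : Proves Ax true (iffF (substF σp (star (strip A A.fvb).1))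
        (substF σp (cstar star (strip A A.fvb).1))) :=
      ipcb_to (ipcb_substF σp (star_iff_cstar hstar _))
    have T2 : Proves Ax true (iffF (substF σp (cstar star (strip A A.fvb).1))
        (substF σc (cstar star (strip A A.fvb).1))) := by
      refine substF_iff_congr hK ?_ _
      intro n
      by_cases hr : A.fvb ≤ n ∧ n < A.fvb + (strip A A.fvb).2.length
      · simp only [hσp, hσc, if_pos hr]
        exact pBoxIff hK (ih _)
      · simp only [hσp, hσc, if_neg hr]
        exact pIffRefl
    exact pIffTrans T1 T2

theorem plus_preserves_main (star : Form → Form) (hstar : IsNNILApproxOp star) (B : Form) :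
    (iGLProves B → iGLProves (plusF star B)) ∧ (iK4Proves B → iK4Proves (plusF star B)) := by
  constructor
  · intro h
    have hAxN : ∀ X, GLAx X → NNILc X := by
      intro X hX
      cases hX <;> (show Form.rho _ ≤ 1) <;> simp [Form.rho]
    have hAxS : ∀ (f : ℕ → Form) (X : Form), GLAx X → GLAx (substF f X) := by
      intro f X hX
      cases hX <;> simp only [substF] <;> constructor
    have hK : ∀ A B, Proves GLAx true (.imp (.box (.imp A B)) (.imp (.box A) (.box B))) :=
      fun A B => .ax (GLAx.k A B)
    have hMin : ∀ X, GLAx X → Proves GLAx true (cminusC star X) := by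
      intro X hX
      cases hX with
      | k A B => exact case_k hstar hK A B
      | four A => exact case_4 hstar hK (fun A => .ax (GLAx.four A)) A
      | lob A => exact case_lob hstar hK (fun A => .ax (GLAx.lob A)) A
    have h1 : Proves GLAx true (cplus star (B.bdep + 1) B) := plus_pres hstar hAxN hAxS hMin h
    have h2 := plusAux_iff hstar hK (B.bdep + 1) B
    exact pIffMp (pIffSymm h2) h1
  · intro h
    have hAxN : ∀ X, K4Ax X → NNILc X := by
      intro X hX
      cases hX <;> (show Form.rho _ ≤ 1) <;> simp [Form.rho]
    have hAxS : ∀ (f : ℕ → Form) (X : Form), K4Ax X → K4Ax (substF f X) := by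
      intro f X hX
      cases hX <;> simp only [substF] <;> constructor
    have hK : ∀ A B, Proves K4Ax true (.imp (.box (.imp A B)) (.imp (.box A) (.box B))) :=
      fun A B => .ax (K4Ax.k A B)
    have hMin : ∀ X, K4Ax X → Proves K4Ax true (cminusC star X) := by
      intro X hX
      cases hX with
      | k A B => exact case_k hstar hK A B
      | four A => exact case_4 hstar hK (fun A => .ax (K4Ax.four A)) A
    have h1 : Proves K4Ax true (cplus star (B.bdep + 1) B) := plus_pres hstar hAxN hAxS hMin h
    have h2 := plusAux_iff hstar hK (B.bdep + 1) B
    exact pIffMp (pIffSymm h2) h1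

end PLHA

namespace PLHA

/-- the TNNIL-algorithm preserves theorems of iGL and of iK4:
if iGL ⊢ B then iGL ⊢ B⁺, and if iK4 ⊢ B then iK4 ⊢ B⁺. -/
theorem plus_preserves_iGL_iK4 (star : Form → Form) (hstar : IsNNILApproxOp star) (B : Form) :
    (iGLProves B → iGLProves (plusF star B)) ∧ (iK4Proves B → iK4Proves (plusF star B)) := by
  exact plus_preserves_main star hstar B

end PLHA
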